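/- arXiv:1801.08307 — 8 statements merged into one kernel-verified Lean document; each statement's English description precedes it below -/
import Mathlib

section
/- For the Lie algebra g₄,₅ with orthonormal basis metric, the curvature tensor R(x,y)z = ∇_x∇_y z − ∇_y∇_x z − ∇_{[x,y]}z has (0,4)-components R₁₂₁₂ = a, R₁₃₁₃ = b, R₁₄₁₄ = 1, R₂₃₂₃ = ab, R₂₄₂₄ = a², R₃₄₃₄ = b², and all components not obtained from these by the symmetries of R vanish. -/
noncomputable section
open Matrix BigOperators

/-- ℝ⁴ -/
abbrev V : Type := Fin 4 → ℝ

/-- standard basis -/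
def e (i : Fin 4) : V := Pi.single i 1

/-- standard Euclidean inner product, `g(eᵢ,eⱼ) = δᵢⱼ` -/
def gdot (x y : V) : ℝ := ∑ i, x i * y i

/-- the cyclic shift `Q e₁ = e₄, Q e₂ = e₁, Q e₃ = e₂, Q e₄ = e₃` -/
def Qv (x : V) : V := fun i => x (i + 1)

/-- `P = Q²` -/
def Pv (x : V) : V := Qv (Qv x)

/-- the bracket of the family g₄,₅ : `[e₁,e₄]=e₁, [e₂,e₄]=a e₂, [e₃,e₄]=b e₃`,
extended bilinearly and antisymmetrically -/
def br45 (a b : ℝ) (x y : V) : V :=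
  (x 0 * y 3 - x 3 * y 0) • e 0 + (a * (x 1 * y 3 - x 3 * y 1)) • e 1
    + (b * (x 2 * y 3 - x 3 * y 2)) • e 2

/-- the bracket of the family g₄,₆ : `[e₁,e₄]=a e₁, [e₂,e₄]=b e₂ − e₃, [e₃,e₄]=e₂ + b e₃` -/
def br46 (a b : ℝ) (x y : V) : V :=
  (a * (x 0 * y 3 - x 3 * y 0)) • e 0
    + (b * (x 1 * y 3 - x 3 * y 1) + (x 2 * y 3 - x 3 * y 2)) • e 1
    + (-(x 1 * y 3 - x 3 * y 1) + b * (x 2 * y 3 - x 3 * y 2)) • e 2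

/-- the Levi-Civita connection of left invariant vector fields via the Koszul formula
`2 g(∇ₓy, z) = g([x,y],z) + g([z,x],y) + g([z,y],x)`, using that `{eₖ}` is orthonormal -/
def koszul (br : V → V → V) (x y : V) : V :=
  fun k => (gdot (br x y) (e k) + gdot (br (e k) x) y + gdot (br (e k) y) x) / 2

/-- the (0,4) curvature tensor `R(x,y,z,u) = g(∇ₓ∇_y z − ∇_y∇ₓ z − ∇_{[x,y]} z, u)` -/
def curv (br : V → V → V) (x y z u : V) : ℝ :=
  gdot (koszul br x (koszul br y z) - koszul br y (koszul br x z) - koszul br (br x y) z) u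

/-- `F(x,y,z) = g((∇ₓP)y, z)` -/
def Ften (br : V → V → V) (x y z : V) : ℝ :=
  gdot (koszul br x (Pv y) - Pv (koszul br x y)) z

/-- the Lee form `θ(x) = gⁱʲ F(eᵢ,eⱼ,x)` -/
def theta (br : V → V → V) (x : V) : ℝ := ∑ i, Ften br (e i) (e i) x


/-- 2x2 minor -/
def Dv (x y : V) (p q : Fin 4) : ℝ := x p * y q - x q * y p

lemma curv45_eval (a b : ℝ) (x y z u : V) :
    curv (br45 a b) x y z u =
      a * (Dv x y 0 1 * Dv z u 0 1) + b * (Dv x y 0 2 * Dv z u 0 2)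
        + 1 * (Dv x y 0 3 * Dv z u 0 3) + (a * b) * (Dv x y 1 2 * Dv z u 1 2)
        + a ^ 2 * (Dv x y 1 3 * Dv z u 1 3) + b ^ 2 * (Dv x y 2 3 * Dv z u 2 3) := by
  simp [curv, koszul, gdot, br45, Dv, e, Fin.sum_univ_four, Pi.single_apply]
  ring

lemma e_apply (i j : Fin 4) : e i j = if j = i then 1 else 0 := by
  simp [e, Pi.single_apply]

lemma det0 (i j p q : Fin 4) (h : i = j ∨ ({i, j} : Finset (Fin 4)) ≠ {p, q}) :
    Dv (e i) (e j) p q = 0 := by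
  rcases h with h | h
  · subst h; simp [Dv]; ring
  · simp only [Dv, e_apply]
    by_cases hpi : p = i <;> by_cases hqj : q = j <;> by_cases hqi : q = i <;>
        by_cases hpj : p = j <;>
      simp_all <;> exact absurd (by subst_vars; exact Finset.pair_comm _ _) h

lemma key (i j k s p q : Fin 4) (h : i = j ∨ ({i, j} : Finset (Fin 4)) ≠ {k, s}) :
    Dv (e i) (e j) p q * Dv (e k) (e s) p q = 0 := by
  rcases h with h | h
  · rw [det0 i j p q (Or.inl h), zero_mul]
  · by_cases hp : ({i, j} : Finset (Fin 4)) = {p, q}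
    · rw [det0 k s p q (Or.inr (by rw [← hp]; exact fun hh => h hh.symm)), mul_zero]
    · rw [det0 i j p q (Or.inr hp), zero_mul]

theorem stmt7 (a b : ℝ) :
    curv (br45 a b) (e 0) (e 1) (e 0) (e 1) = a ∧
    curv (br45 a b) (e 0) (e 2) (e 0) (e 2) = b ∧
    curv (br45 a b) (e 0) (e 3) (e 0) (e 3) = 1 ∧
    curv (br45 a b) (e 1) (e 2) (e 1) (e 2) = a * b ∧
    curv (br45 a b) (e 1) (e 3) (e 1) (e 3) = a ^ 2 ∧
    curv (br45 a b) (e 2) (e 3) (e 2) (e 3) = b ^ 2 ∧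
    ∀ i j k s : Fin 4, ¬(i ≠ j ∧ ({i, j} : Finset (Fin 4)) = {k, s}) →
      curv (br45 a b) (e i) (e j) (e k) (e s) = 0 := by
  refine ⟨?_, ?_, ?_, ?_, ?_, ?_, ?_⟩
  · rw [curv45_eval]; simp [Dv, e_apply]
  · rw [curv45_eval]; simp [Dv, e_apply]
  · rw [curv45_eval]; simp [Dv, e_apply]
  · rw [curv45_eval]; simp [Dv, e_apply]
  · rw [curv45_eval]; simp [Dv, e_apply]
  · rw [curv45_eval]; simp [Dv, e_apply]
  · intro i j k s h
    have h' : i = j ∨ ({i, j} : Finset (Fin 4)) ≠ {k, s} := by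
      by_cases hij : i = j
      · exact Or.inl hij
      · exact Or.inr fun hc => h ⟨hij, hc⟩
    rw [curv45_eval, key i j k s 0 1 h', key i j k s 0 2 h', key i j k s 0 3 h',
      key i j k s 1 2 h', key i j k s 1 3 h', key i j k s 2 3 h']
    ring
end
end

section
/- For g₄,₅ with −1 ≤ b ≤ a ≤ 1 and ab ≠ 0, the curvature tensor satisfies R(Qx,Qy,Qz,Qu) = R(x,y,z,u) for all x,y,z,u if and only if a = b = 1, where Q is the cyclic structure Qe₁=e₄, Qe₂=e₁, Qe₃=e₂, Qe₄=e₃. -/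
set_option maxHeartbeats 1600000
noncomputable section
open Matrix BigOperators

theorem stmt8 (a b : ℝ) (h1 : -1 ≤ b) (h2 : b ≤ a) (h3 : a ≤ 1) (h4 : a * b ≠ 0) :
    (∀ x y z u : V,
      curv (br45 a b) (Qv x) (Qv y) (Qv z) (Qv u) = curv (br45 a b) x y z u) ↔
    (a = 1 ∧ b = 1) := by
  constructor
  · intro h
    have E1 := h (e 0) (e 3) (e 3) (e 0)
    have E2 := h (e 1) (e 3) (e 3) (e 1)
    simp [curv, koszul, br45, gdot, e, Qv, Fin.sum_univ_four, Pi.single,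
      Function.update] at E1 E2
    have hb : b = 1 := by nlinarith [sq_nonneg a, sq_nonneg (b - 1), sq_nonneg (b + 1)]
    have ha : a = 1 := by nlinarith [sq_nonneg (a - 1)]
    exact ⟨ha, hb⟩
  · rintro ⟨rfl, rfl⟩
    intro x y z u
    simp [curv, koszul, br45, gdot, e, Qv, Fin.sum_univ_four, Pi.single, Function.update]
    ring
end
end

section
/- The Q-invariance condition R(Qx,Qy,Qz,Qu) = R(x,y,z,u) for all vectors is equivalent to the system of component equations: R₁₂₁₂=R₃₄₃₄=R₂₃₂₃=R₁₄₁₄, R₁₃₁₃=R₂₄₂₄, R₁₂₁₃=R₂₃₂₄=R₁₄₂₄=R₃₁₃₄, R₁₂₁₄=R₁₄₃₄=R₂₁₂₃=R₃₂₃₄, R₁₂₂₄=R₃₁₂₃=R₃₁₁₄=R₄₂₃₄, R₁₃₂₄=0. -/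
noncomputable section
open Matrix BigOperators

/-- the quadrilinear extension of a (0,4)-tensor given by its components -/
def Tq (R : Fin 4 → Fin 4 → Fin 4 → Fin 4 → ℝ) (x y z u : V) : ℝ :=
  ∑ i, ∑ j, ∑ k, ∑ s, x i * y j * z k * u s * R i j k s


lemma Qe (a : Fin 4) : Qv (e a) = e (a - 1) := by
  funext i; simp [Qv, e, Pi.single_apply, eq_sub_iff_add_eq]

lemma Tq_e (R : Fin 4 → Fin 4 → Fin 4 → Fin 4 → ℝ) (a b c d : Fin 4) :
    Tq R (e a) (e b) (e c) (e d) = R a b c d := by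
  simp [Tq, e, Pi.single_apply, ite_mul, zero_mul, one_mul, Finset.sum_ite_eq']

set_option maxHeartbeats 4000000 in
theorem stmt9 (R : Fin 4 → Fin 4 → Fin 4 → Fin 4 → ℝ)
    (hA1 : ∀ i j k s, R j i k s = - R i j k s)
    (hA2 : ∀ i j k s, R i j s k = - R i j k s)
    (hP : ∀ i j k s, R k s i j = R i j k s)
    (hB : ∀ i j k s, R i j k s + R j k i s + R k i j s = 0) :
    (∀ x y z u : V, Tq R (Qv x) (Qv y) (Qv z) (Qv u) = Tq R x y z u) ↔
    (R 0 1 0 1 = R 2 3 2 3 ∧ R 2 3 2 3 = R 1 2 1 2 ∧ R 1 2 1 2 = R 0 3 0 3 ∧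
     R 0 2 0 2 = R 1 3 1 3 ∧
     R 0 1 0 2 = R 1 2 1 3 ∧ R 1 2 1 3 = R 0 3 1 3 ∧ R 0 3 1 3 = R 2 0 2 3 ∧
     R 0 1 0 3 = R 0 3 2 3 ∧ R 0 3 2 3 = R 1 0 1 2 ∧ R 1 0 1 2 = R 2 1 2 3 ∧
     R 0 1 1 3 = R 2 0 1 2 ∧ R 2 0 1 2 = R 2 0 0 3 ∧ R 2 0 0 3 = R 3 1 2 3 ∧
     R 0 2 1 3 = 0) := by
  constructor
  · intro h
    have hc : ∀ a b c d : Fin 4, R (a-1) (b-1) (c-1) (d-1) = R a b c d := by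
      intro a b c d
      have hx := h (e a) (e b) (e c) (e d)
      rw [Qe a, Qe b, Qe c, Qe d, Tq_e, Tq_e] at hx
      exact hx
    have S0101 : R 0 1 0 1 = R 1 2 1 2 := by
      simpa using hc 1 2 1 2
    have S0102 : R 0 1 0 2 = R 1 2 1 3 := by
      simpa using hc 1 2 1 3
    have S0103 : R 0 1 0 3 = R 1 2 1 0 := by
      simpa [show (-1 : Fin 4) = 3 from rfl] using hc 1 2 1 0
    have S0112 : R 0 1 1 2 = R 1 2 2 3 := by
      simpa using hc 1 2 2 3
    have S0113 : R 0 1 1 3 = R 1 2 2 0 := by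
      simpa [show (-1 : Fin 4) = 3 from rfl] using hc 1 2 2 0
    have S0202 : R 0 2 0 2 = R 1 3 1 3 := by
      simpa using hc 1 3 1 3
    have S0203 : R 0 2 0 3 = R 1 3 1 0 := by
      simpa [show (-1 : Fin 4) = 3 from rfl] using hc 1 3 1 0
    have S0212 : R 0 2 1 2 = R 1 3 2 3 := by
      simpa using hc 1 3 2 3
    have S0213 : R 0 2 1 3 = R 1 3 2 0 := by
      simpa [show (-1 : Fin 4) = 3 from rfl] using hc 1 3 2 0
    have S0313 : R 0 3 1 3 = R 1 0 2 0 := by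
      simpa [show (-1 : Fin 4) = 3 from rfl] using hc 1 0 2 0
    have S0323 : R 0 3 2 3 = R 1 0 3 0 := by
      simpa [show (-1 : Fin 4) = 3 from rfl] using hc 1 0 3 0
    have S1020 : R 1 0 2 0 = R 2 1 3 1 := by
      simpa using hc 2 1 3 1
    have S1030 : R 1 0 3 0 = R 2 1 0 1 := by
      simpa [show (-1 : Fin 4) = 3 from rfl] using hc 2 1 0 1
    have S1210 : R 1 2 1 0 = R 2 3 2 1 := by
      simpa using hc 2 3 2 1
    have S1212 : R 1 2 1 2 = R 2 3 2 3 := by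
      simpa using hc 2 3 2 3
    have S1213 : R 1 2 1 3 = R 2 3 2 0 := by
      simpa [show (-1 : Fin 4) = 3 from rfl] using hc 2 3 2 0
    have S1310 : R 1 3 1 0 = R 2 0 2 1 := by
      simpa [show (-1 : Fin 4) = 3 from rfl] using hc 2 0 2 1
    have S1323 : R 1 3 2 3 = R 2 0 3 0 := by
      simpa [show (-1 : Fin 4) = 3 from rfl] using hc 2 0 3 0
    have S2021 : R 2 0 2 1 = R 3 1 3 2 := by
      simpa using hc 3 1 3 2
    have S2131 : R 2 1 3 1 = R 3 2 0 2 := by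
      simpa [show (-1 : Fin 4) = 3 from rfl] using hc 3 2 0 2
    have S2320 : R 2 3 2 0 = R 3 0 3 1 := by
      simpa [show (-1 : Fin 4) = 3 from rfl] using hc 3 0 3 1
    have S2321 : R 2 3 2 1 = R 3 0 3 2 := by
      simpa [show (-1 : Fin 4) = 3 from rfl] using hc 3 0 3 2
    have S2323 : R 2 3 2 3 = R 3 0 3 0 := by
      simpa [show (-1 : Fin 4) = 3 from rfl] using hc 3 0 3 0
    have S3030 : R 3 0 3 0 = R 0 1 0 1 := by
      simpa [show (-1 : Fin 4) = 3 from rfl] using hc 0 1 0 1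
    refine ⟨?_, ?_, ?_, ?_, ?_, ?_, ?_, ?_, ?_, ?_, ?_, ?_, ?_, ?_⟩
    · linear_combination S0101 + S1212
    · linear_combination S2323 + S3030 + S0101
    · linear_combination S1212 + S2323 + (hA1 0 3 3 0) + (-1 : ℝ) * (hA2 0 3 0 3)
    · linear_combination S0202
    · linear_combination S0102
    · linear_combination S1213 + S2320 + (hA1 0 3 3 1) + (-1 : ℝ) * (hA2 0 3 1 3)
    · linear_combination (-1 : ℝ) * (hA1 0 2 2 3) + S0313 + S1020 + S2131 + (hA1 2 3 0 2) + (-1 : ℝ) * (hP 0 2 2 3)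
    · linear_combination S0103 + S1210 + S2321 + (hA1 0 3 3 2) + (-1 : ℝ) * (hA2 0 3 2 3)
    · linear_combination (-1 : ℝ) * (hA1 0 1 1 2) + S0323 + S1030 + (hA1 1 2 0 1) + (-1 : ℝ) * (hP 0 1 1 2)
    · linear_combination (hA1 0 1 1 2) + (-1 : ℝ) * (hA1 1 2 2 3) + (-1 : ℝ) * S0112
    · linear_combination (-1 : ℝ) * (hA1 0 2 1 2) + S0113 + (hA2 1 2 0 2) + (-1 : ℝ) * (hP 0 2 1 2)
    · linear_combination (hA1 0 2 1 2) + (-1 : ℝ) * (hA1 0 2 0 3) + (-1 : ℝ) * S0212 + (-1 : ℝ) * S1323 + (-1 : ℝ) * (hA1 0 2 3 0) + (hA2 0 2 0 3)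
    · linear_combination (hA1 0 2 0 3) + (-1 : ℝ) * (hA1 1 3 2 3) + (-1 : ℝ) * S0203 + (-1 : ℝ) * S1310 + (-1 : ℝ) * S2021 + (-1 : ℝ) * (hA1 1 3 3 2) + (hA2 1 3 2 3)
    · linear_combination (1/2 : ℝ) * S0213 + (1/2 : ℝ) * (hA2 1 3 0 2) + (-1/2 : ℝ) * (hP 0 2 1 3)
  · rintro ⟨h1, h2, h3, h4, h5, h6, h7, h8, h9, h10, h11, h12, h13, h14⟩
    have E0000 : R 0 0 0 0 = R 1 1 1 1 := by
      linear_combination (1/2 : ℝ) * (hA1 0 0 0 0) + (-1/2 : ℝ) * (hA1 1 1 1 1)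
    have E0001 : R 0 0 0 1 = R 1 1 1 2 := by
      linear_combination (1/2 : ℝ) * (hA1 0 0 0 1) + (-1/2 : ℝ) * (hA1 1 1 1 2)
    have E0002 : R 0 0 0 2 = R 1 1 1 3 := by
      linear_combination (1/2 : ℝ) * (hA1 0 0 0 2) + (-1/2 : ℝ) * (hA1 1 1 1 3)
    have E0003 : R 0 0 0 3 = R 1 1 1 0 := by
      linear_combination (1/2 : ℝ) * (hA1 0 0 0 3) + (-1/2 : ℝ) * (hA1 1 1 1 0)
    have E0010 : R 0 0 1 0 = R 1 1 2 1 := by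
      linear_combination (1/2 : ℝ) * (hA1 0 0 1 0) + (-1/2 : ℝ) * (hA1 1 1 2 1)
    have E0011 : R 0 0 1 1 = R 1 1 2 2 := by
      linear_combination (1/2 : ℝ) * (hA1 0 0 1 1) + (-1/2 : ℝ) * (hA1 1 1 2 2)
    have E0012 : R 0 0 1 2 = R 1 1 2 3 := by
      linear_combination (1/2 : ℝ) * (hA1 0 0 1 2) + (-1/2 : ℝ) * (hA1 1 1 2 3)
    have E0013 : R 0 0 1 3 = R 1 1 2 0 := by
      linear_combination (1/2 : ℝ) * (hA1 0 0 1 3) + (-1/2 : ℝ) * (hA1 1 1 2 0)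
    have E0020 : R 0 0 2 0 = R 1 1 3 1 := by
      linear_combination (1/2 : ℝ) * (hA1 0 0 2 0) + (-1/2 : ℝ) * (hA1 1 1 3 1)
    have E0021 : R 0 0 2 1 = R 1 1 3 2 := by
      linear_combination (1/2 : ℝ) * (hA1 0 0 2 1) + (-1/2 : ℝ) * (hA1 1 1 3 2)
    have E0022 : R 0 0 2 2 = R 1 1 3 3 := by
      linear_combination (1/2 : ℝ) * (hA1 0 0 2 2) + (-1/2 : ℝ) * (hA1 1 1 3 3)
    have E0023 : R 0 0 2 3 = R 1 1 3 0 := by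
      linear_combination (1/2 : ℝ) * (hA1 0 0 2 3) + (-1/2 : ℝ) * (hA1 1 1 3 0)
    have E0030 : R 0 0 3 0 = R 1 1 0 1 := by
      linear_combination (1/2 : ℝ) * (hA1 0 0 3 0) + (-1/2 : ℝ) * (hA1 1 1 0 1)
    have E0031 : R 0 0 3 1 = R 1 1 0 2 := by
      linear_combination (1/2 : ℝ) * (hA1 0 0 3 1) + (-1/2 : ℝ) * (hA1 1 1 0 2)
    have E0032 : R 0 0 3 2 = R 1 1 0 3 := by
      linear_combination (1/2 : ℝ) * (hA1 0 0 3 2) + (-1/2 : ℝ) * (hA1 1 1 0 3)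
    have E0033 : R 0 0 3 3 = R 1 1 0 0 := by
      linear_combination (1/2 : ℝ) * (hA1 0 0 3 3) + (-1/2 : ℝ) * (hA1 1 1 0 0)
    have E0100 : R 0 1 0 0 = R 1 2 1 1 := by
      linear_combination (1/2 : ℝ) * (hA2 0 1 0 0) + (-1/2 : ℝ) * (hA2 1 2 1 1)
    have E0101 : R 0 1 0 1 = R 1 2 1 2 := by
      linear_combination h1 + h2
    have E0102 : R 0 1 0 2 = R 1 2 1 3 := by
      linear_combination h5
    have E0103 : R 0 1 0 3 = R 1 2 1 0 := by
      linear_combination (-1 : ℝ) * (hA2 1 2 0 1) + (hP 0 1 1 2) + h8 + h9 + (hA1 0 1 1 2)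
    have E0110 : R 0 1 1 0 = R 1 2 2 1 := by
      linear_combination (hA2 0 1 0 1) + (-1 : ℝ) * (hA2 1 2 1 2) + (-1 : ℝ) * h1 + (-1 : ℝ) * h2
    have E0111 : R 0 1 1 1 = R 1 2 2 2 := by
      linear_combination (1/2 : ℝ) * (hA2 0 1 1 1) + (-1/2 : ℝ) * (hA2 1 2 2 2)
    have E0112 : R 0 1 1 2 = R 1 2 2 3 := by
      linear_combination (hA1 0 1 1 2) + (-1 : ℝ) * h10 + (-1 : ℝ) * (hA1 1 2 2 3)
    have E0113 : R 0 1 1 3 = R 1 2 2 0 := by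
      linear_combination (-1 : ℝ) * (hA2 1 2 0 2) + (hP 0 2 1 2) + h11 + (hA1 0 2 1 2)
    have E0120 : R 0 1 2 0 = R 1 2 3 1 := by
      linear_combination (hA2 0 1 0 2) + (-1 : ℝ) * (hA2 1 2 1 3) + (-1 : ℝ) * h5
    have E0121 : R 0 1 2 1 = R 1 2 3 2 := by
      linear_combination (hA2 0 1 1 2) + (-1 : ℝ) * (hA2 1 2 2 3) + (-1 : ℝ) * (hA1 0 1 1 2) + h10 + (hA1 1 2 2 3)
    have E0122 : R 0 1 2 2 = R 1 2 3 3 := by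
      linear_combination (1/2 : ℝ) * (hA2 0 1 2 2) + (-1/2 : ℝ) * (hA2 1 2 3 3)
    have E0123 : R 0 1 2 3 = R 1 2 3 0 := by
      linear_combination (-1 : ℝ) * (hA2 1 2 0 3) + (hB 0 1 2 3) + (-1 : ℝ) * (hA1 0 2 1 3) + h14
    have E0130 : R 0 1 3 0 = R 1 2 0 1 := by
      linear_combination (hA2 0 1 0 3) + (-1 : ℝ) * (hP 0 1 1 2) + (-1 : ℝ) * h8 + (-1 : ℝ) * h9 + (-1 : ℝ) * (hA1 0 1 1 2)
    have E0131 : R 0 1 3 1 = R 1 2 0 2 := by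
      linear_combination (hA2 0 1 1 3) + (-1 : ℝ) * (hP 0 2 1 2) + (-1 : ℝ) * h11 + (-1 : ℝ) * (hA1 0 2 1 2)
    have E0132 : R 0 1 3 2 = R 1 2 0 3 := by
      linear_combination (hA2 0 1 2 3) + (-1 : ℝ) * (hB 0 1 2 3) + (hA1 0 2 1 3) + (-1 : ℝ) * h14
    have E0133 : R 0 1 3 3 = R 1 2 0 0 := by
      linear_combination (1/2 : ℝ) * (hA2 0 1 3 3) + (-1/2 : ℝ) * (hA2 1 2 0 0)
    have E0200 : R 0 2 0 0 = R 1 3 1 1 := by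
      linear_combination (1/2 : ℝ) * (hA2 0 2 0 0) + (-1/2 : ℝ) * (hA2 1 3 1 1)
    have E0201 : R 0 2 0 1 = R 1 3 1 2 := by
      linear_combination (hP 0 1 0 2) + (-1 : ℝ) * (hP 1 2 1 3) + h5
    have E0202 : R 0 2 0 2 = R 1 3 1 3 := by
      linear_combination h4
    have E0203 : R 0 2 0 3 = R 1 3 1 0 := by
      linear_combination (-1 : ℝ) * (hA2 1 3 0 1) + (hP 0 1 1 3) + h11 + h12 + (hA1 0 2 0 3)
    have E0210 : R 0 2 1 0 = R 1 3 2 1 := by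
      linear_combination (hA2 0 2 0 1) + (-1 : ℝ) * (hP 0 1 0 2) + (-1 : ℝ) * (hA2 1 3 1 2) + (hP 1 2 1 3) + (-1 : ℝ) * h5
    have E0211 : R 0 2 1 1 = R 1 3 2 2 := by
      linear_combination (1/2 : ℝ) * (hA2 0 2 1 1) + (-1/2 : ℝ) * (hA2 1 3 2 2)
    have E0212 : R 0 2 1 2 = R 1 3 2 3 := by
      linear_combination (hA1 0 2 1 2) + (-1 : ℝ) * h12 + (-1 : ℝ) * h13 + (-1 : ℝ) * (hA1 1 3 2 3)
    have E0213 : R 0 2 1 3 = R 1 3 2 0 := by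
      linear_combination (-1 : ℝ) * (hA2 1 3 0 2) + (hP 0 2 1 3) + (2/1 : ℝ) * h14
    have E0220 : R 0 2 2 0 = R 1 3 3 1 := by
      linear_combination (hA2 0 2 0 2) + (-1 : ℝ) * (hA2 1 3 1 3) + (-1 : ℝ) * h4
    have E0221 : R 0 2 2 1 = R 1 3 3 2 := by
      linear_combination (hA2 0 2 1 2) + (-1 : ℝ) * (hA2 1 3 2 3) + (-1 : ℝ) * (hA1 0 2 1 2) + h12 + h13 + (hA1 1 3 2 3)
    have E0222 : R 0 2 2 2 = R 1 3 3 3 := by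
      linear_combination (1/2 : ℝ) * (hA2 0 2 2 2) + (-1/2 : ℝ) * (hA2 1 3 3 3)
    have E0223 : R 0 2 2 3 = R 1 3 3 0 := by
      linear_combination (-1 : ℝ) * (hA2 1 3 0 3) + (hP 0 3 1 3) + h7 + (hA1 0 2 2 3)
    have E0230 : R 0 2 3 0 = R 1 3 0 1 := by
      linear_combination (hA2 0 2 0 3) + (-1 : ℝ) * (hP 0 1 1 3) + (-1 : ℝ) * h11 + (-1 : ℝ) * h12 + (-1 : ℝ) * (hA1 0 2 0 3)
    have E0231 : R 0 2 3 1 = R 1 3 0 2 := by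
      linear_combination (hA2 0 2 1 3) + (-1 : ℝ) * (hP 0 2 1 3) + (-2/1 : ℝ) * h14
    have E0232 : R 0 2 3 2 = R 1 3 0 3 := by
      linear_combination (hA2 0 2 2 3) + (-1 : ℝ) * (hP 0 3 1 3) + (-1 : ℝ) * h7 + (-1 : ℝ) * (hA1 0 2 2 3)
    have E0233 : R 0 2 3 3 = R 1 3 0 0 := by
      linear_combination (1/2 : ℝ) * (hA2 0 2 3 3) + (-1/2 : ℝ) * (hA2 1 3 0 0)
    have E0300 : R 0 3 0 0 = R 1 0 1 1 := by
      linear_combination (1/2 : ℝ) * (hA2 0 3 0 0) + (-1/2 : ℝ) * (hA2 1 0 1 1)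
    have E0301 : R 0 3 0 1 = R 1 0 1 2 := by
      linear_combination (hP 0 1 0 3) + h8 + h9
    have E0302 : R 0 3 0 2 = R 1 0 1 3 := by
      linear_combination (hP 0 2 0 3) + (-1 : ℝ) * (hA1 0 1 1 3) + h11 + h12 + (hA1 0 2 0 3)
    have E0303 : R 0 3 0 3 = R 1 0 1 0 := by
      linear_combination (-1 : ℝ) * (hA1 0 1 1 0) + (hA2 0 1 0 1) + (-1 : ℝ) * h1 + (-1 : ℝ) * h2 + (-1 : ℝ) * h3
    have E0310 : R 0 3 1 0 = R 1 0 2 1 := by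
      linear_combination (hA2 0 3 0 1) + (-1 : ℝ) * (hP 0 1 0 3) + (-1 : ℝ) * (hA1 0 1 2 1) + (hA2 0 1 1 2) + (-1 : ℝ) * h8 + (-1 : ℝ) * h9 + (-1 : ℝ) * (hA1 0 1 1 2)
    have E0311 : R 0 3 1 1 = R 1 0 2 2 := by
      linear_combination (1/2 : ℝ) * (hA2 0 3 1 1) + (-1/2 : ℝ) * (hA2 1 0 2 2)
    have E0312 : R 0 3 1 2 = R 1 0 2 3 := by
      linear_combination (-1 : ℝ) * (hA1 0 1 2 3) + (hB 0 1 2 3) + (-1 : ℝ) * (hP 0 3 1 2) + (-1 : ℝ) * (hA1 0 2 1 3) + h14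
    have E0313 : R 0 3 1 3 = R 1 0 2 0 := by
      linear_combination (-1 : ℝ) * (hA1 0 1 2 0) + (hA2 0 1 0 2) + (-1 : ℝ) * h5 + (-1 : ℝ) * h6
    have E0320 : R 0 3 2 0 = R 1 0 3 1 := by
      linear_combination (hA2 0 3 0 2) + (-1 : ℝ) * (hP 0 2 0 3) + (-1 : ℝ) * (hA1 0 1 3 1) + (hA2 0 1 1 3) + (-1 : ℝ) * h11 + (-1 : ℝ) * h12 + (-1 : ℝ) * (hA1 0 2 0 3)
    have E0321 : R 0 3 2 1 = R 1 0 3 2 := by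
      linear_combination (hA2 0 3 1 2) + (-1 : ℝ) * (hA1 0 1 3 2) + (hA2 0 1 2 3) + (-1 : ℝ) * (hB 0 1 2 3) + (hP 0 3 1 2) + (hA1 0 2 1 3) + (-1 : ℝ) * h14
    have E0322 : R 0 3 2 2 = R 1 0 3 3 := by
      linear_combination (1/2 : ℝ) * (hA2 0 3 2 2) + (-1/2 : ℝ) * (hA2 1 0 3 3)
    have E0323 : R 0 3 2 3 = R 1 0 3 0 := by
      linear_combination (-1 : ℝ) * (hA1 0 1 3 0) + (hA2 0 1 0 3) + (-1 : ℝ) * h8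
    have E0330 : R 0 3 3 0 = R 1 0 0 1 := by
      linear_combination (hA2 0 3 0 3) + (-1 : ℝ) * (hA1 0 1 0 1) + h1 + h2 + h3
    have E0331 : R 0 3 3 1 = R 1 0 0 2 := by
      linear_combination (hA2 0 3 1 3) + (-1 : ℝ) * (hA1 0 1 0 2) + h5 + h6
    have E0332 : R 0 3 3 2 = R 1 0 0 3 := by
      linear_combination (hA2 0 3 2 3) + (-1 : ℝ) * (hA1 0 1 0 3) + h8
    have E0333 : R 0 3 3 3 = R 1 0 0 0 := by
      linear_combination (1/2 : ℝ) * (hA2 0 3 3 3) + (-1/2 : ℝ) * (hA2 1 0 0 0)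
    have E1000 : R 1 0 0 0 = R 2 1 1 1 := by
      linear_combination (1/2 : ℝ) * (hA2 1 0 0 0) + (-1/2 : ℝ) * (hA2 2 1 1 1)
    have E1001 : R 1 0 0 1 = R 2 1 1 2 := by
      linear_combination (hA1 0 1 0 1) + (-1 : ℝ) * (hA1 1 2 1 2) + (-1 : ℝ) * h1 + (-1 : ℝ) * h2
    have E1002 : R 1 0 0 2 = R 2 1 1 3 := by
      linear_combination (hA1 0 1 0 2) + (-1 : ℝ) * (hA1 1 2 1 3) + (-1 : ℝ) * h5
    have E1003 : R 1 0 0 3 = R 2 1 1 0 := by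
      linear_combination (hA1 0 1 0 3) + (-1 : ℝ) * (hA1 1 2 1 0) + (hA2 1 2 0 1) + (-1 : ℝ) * (hP 0 1 1 2) + (-1 : ℝ) * h8 + (-1 : ℝ) * h9 + (-1 : ℝ) * (hA1 0 1 1 2)
    have E1010 : R 1 0 1 0 = R 2 1 2 1 := by
      linear_combination (hA1 0 1 1 0) + (-1 : ℝ) * (hA2 0 1 0 1) + (-1 : ℝ) * (hA1 1 2 2 1) + (hA2 1 2 1 2) + h1 + h2
    have E1011 : R 1 0 1 1 = R 2 1 2 2 := by
      linear_combination (1/2 : ℝ) * (hA2 1 0 1 1) + (-1/2 : ℝ) * (hA2 2 1 2 2)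
    have E1012 : R 1 0 1 2 = R 2 1 2 3 := by
      linear_combination h10
    have E1013 : R 1 0 1 3 = R 2 1 2 0 := by
      linear_combination (hA1 0 1 1 3) + (-1 : ℝ) * (hA1 1 2 2 0) + (hA2 1 2 0 2) + (-1 : ℝ) * (hP 0 2 1 2) + (-1 : ℝ) * h11 + (-1 : ℝ) * (hA1 0 2 1 2)
    have E1020 : R 1 0 2 0 = R 2 1 3 1 := by
      linear_combination (hA1 0 1 2 0) + (-1 : ℝ) * (hA2 0 1 0 2) + (-1 : ℝ) * (hA1 1 2 3 1) + (hA2 1 2 1 3) + h5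
    have E1021 : R 1 0 2 1 = R 2 1 3 2 := by
      linear_combination (hA1 0 1 2 1) + (-1 : ℝ) * (hA2 0 1 1 2) + (-1 : ℝ) * (hA1 1 2 3 2) + (hA2 1 2 2 3) + (hA1 0 1 1 2) + (-1 : ℝ) * h10 + (-1 : ℝ) * (hA1 1 2 2 3)
    have E1022 : R 1 0 2 2 = R 2 1 3 3 := by
      linear_combination (1/2 : ℝ) * (hA2 1 0 2 2) + (-1/2 : ℝ) * (hA2 2 1 3 3)
    have E1023 : R 1 0 2 3 = R 2 1 3 0 := by
      linear_combination (hA1 0 1 2 3) + (-1 : ℝ) * (hA1 1 2 3 0) + (hA2 1 2 0 3) + (-1 : ℝ) * (hB 0 1 2 3) + (hA1 0 2 1 3) + (-1 : ℝ) * h14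
    have E1030 : R 1 0 3 0 = R 2 1 0 1 := by
      linear_combination (hA1 0 1 3 0) + (-1 : ℝ) * (hA2 0 1 0 3) + (-1 : ℝ) * (hA1 1 2 0 1) + (hP 0 1 1 2) + h8 + h9 + (hA1 0 1 1 2)
    have E1031 : R 1 0 3 1 = R 2 1 0 2 := by
      linear_combination (hA1 0 1 3 1) + (-1 : ℝ) * (hA2 0 1 1 3) + (-1 : ℝ) * (hA1 1 2 0 2) + (hP 0 2 1 2) + h11 + (hA1 0 2 1 2)
    have E1032 : R 1 0 3 2 = R 2 1 0 3 := by
      linear_combination (hA1 0 1 3 2) + (-1 : ℝ) * (hA2 0 1 2 3) + (-1 : ℝ) * (hA1 1 2 0 3) + (hB 0 1 2 3) + (-1 : ℝ) * (hA1 0 2 1 3) + h14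
    have E1033 : R 1 0 3 3 = R 2 1 0 0 := by
      linear_combination (1/2 : ℝ) * (hA2 1 0 3 3) + (-1/2 : ℝ) * (hA2 2 1 0 0)
    have E1100 : R 1 1 0 0 = R 2 2 1 1 := by
      linear_combination (1/2 : ℝ) * (hA1 1 1 0 0) + (-1/2 : ℝ) * (hA1 2 2 1 1)
    have E1101 : R 1 1 0 1 = R 2 2 1 2 := by
      linear_combination (1/2 : ℝ) * (hA1 1 1 0 1) + (-1/2 : ℝ) * (hA1 2 2 1 2)
    have E1102 : R 1 1 0 2 = R 2 2 1 3 := by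
      linear_combination (1/2 : ℝ) * (hA1 1 1 0 2) + (-1/2 : ℝ) * (hA1 2 2 1 3)
    have E1103 : R 1 1 0 3 = R 2 2 1 0 := by
      linear_combination (1/2 : ℝ) * (hA1 1 1 0 3) + (-1/2 : ℝ) * (hA1 2 2 1 0)
    have E1110 : R 1 1 1 0 = R 2 2 2 1 := by
      linear_combination (1/2 : ℝ) * (hA1 1 1 1 0) + (-1/2 : ℝ) * (hA1 2 2 2 1)
    have E1111 : R 1 1 1 1 = R 2 2 2 2 := by
      linear_combination (1/2 : ℝ) * (hA1 1 1 1 1) + (-1/2 : ℝ) * (hA1 2 2 2 2)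
    have E1112 : R 1 1 1 2 = R 2 2 2 3 := by
      linear_combination (1/2 : ℝ) * (hA1 1 1 1 2) + (-1/2 : ℝ) * (hA1 2 2 2 3)
    have E1113 : R 1 1 1 3 = R 2 2 2 0 := by
      linear_combination (1/2 : ℝ) * (hA1 1 1 1 3) + (-1/2 : ℝ) * (hA1 2 2 2 0)
    have E1120 : R 1 1 2 0 = R 2 2 3 1 := by
      linear_combination (1/2 : ℝ) * (hA1 1 1 2 0) + (-1/2 : ℝ) * (hA1 2 2 3 1)
    have E1121 : R 1 1 2 1 = R 2 2 3 2 := by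
      linear_combination (1/2 : ℝ) * (hA1 1 1 2 1) + (-1/2 : ℝ) * (hA1 2 2 3 2)
    have E1122 : R 1 1 2 2 = R 2 2 3 3 := by
      linear_combination (1/2 : ℝ) * (hA1 1 1 2 2) + (-1/2 : ℝ) * (hA1 2 2 3 3)
    have E1123 : R 1 1 2 3 = R 2 2 3 0 := by
      linear_combination (1/2 : ℝ) * (hA1 1 1 2 3) + (-1/2 : ℝ) * (hA1 2 2 3 0)
    have E1130 : R 1 1 3 0 = R 2 2 0 1 := by
      linear_combination (1/2 : ℝ) * (hA1 1 1 3 0) + (-1/2 : ℝ) * (hA1 2 2 0 1)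
    have E1131 : R 1 1 3 1 = R 2 2 0 2 := by
      linear_combination (1/2 : ℝ) * (hA1 1 1 3 1) + (-1/2 : ℝ) * (hA1 2 2 0 2)
    have E1132 : R 1 1 3 2 = R 2 2 0 3 := by
      linear_combination (1/2 : ℝ) * (hA1 1 1 3 2) + (-1/2 : ℝ) * (hA1 2 2 0 3)
    have E1133 : R 1 1 3 3 = R 2 2 0 0 := by
      linear_combination (1/2 : ℝ) * (hA1 1 1 3 3) + (-1/2 : ℝ) * (hA1 2 2 0 0)
    have E1200 : R 1 2 0 0 = R 2 3 1 1 := by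
      linear_combination (1/2 : ℝ) * (hA2 1 2 0 0) + (-1/2 : ℝ) * (hA2 2 3 1 1)
    have E1201 : R 1 2 0 1 = R 2 3 1 2 := by
      linear_combination (hP 0 1 1 2) + (-1 : ℝ) * (hP 1 2 2 3) + (hA1 0 1 1 2) + (-1 : ℝ) * h10 + (-1 : ℝ) * (hA1 1 2 2 3)
    have E1202 : R 1 2 0 2 = R 2 3 1 3 := by
      linear_combination (hP 0 2 1 2) + (-1 : ℝ) * (hP 1 3 2 3) + (hA1 0 2 1 2) + (-1 : ℝ) * h12 + (-1 : ℝ) * h13 + (-1 : ℝ) * (hA1 1 3 2 3)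
    have E1203 : R 1 2 0 3 = R 2 3 1 0 := by
      linear_combination (-1 : ℝ) * (hA2 2 3 0 1) + (hP 0 1 2 3) + (hB 0 1 2 3) + (-1 : ℝ) * (hA1 0 2 1 3) + h14
    have E1210 : R 1 2 1 0 = R 2 3 2 1 := by
      linear_combination (hA2 1 2 0 1) + (-1 : ℝ) * (hP 0 1 1 2) + (-1 : ℝ) * (hA2 2 3 1 2) + (hP 1 2 2 3) + (-1 : ℝ) * (hA1 0 1 1 2) + h10 + (hA1 1 2 2 3)
    have E1211 : R 1 2 1 1 = R 2 3 2 2 := by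
      linear_combination (1/2 : ℝ) * (hA2 1 2 1 1) + (-1/2 : ℝ) * (hA2 2 3 2 2)
    have E1212 : R 1 2 1 2 = R 2 3 2 3 := by
      linear_combination (-1 : ℝ) * h2
    have E1213 : R 1 2 1 3 = R 2 3 2 0 := by
      linear_combination (-1 : ℝ) * (hA2 2 3 0 2) + (hP 0 2 2 3) + h6 + h7 + (hA1 0 2 2 3)
    have E1220 : R 1 2 2 0 = R 2 3 3 1 := by
      linear_combination (hA2 1 2 0 2) + (-1 : ℝ) * (hP 0 2 1 2) + (-1 : ℝ) * (hA2 2 3 1 3) + (hP 1 3 2 3) + (-1 : ℝ) * (hA1 0 2 1 2) + h12 + h13 + (hA1 1 3 2 3)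
    have E1221 : R 1 2 2 1 = R 2 3 3 2 := by
      linear_combination (hA2 1 2 1 2) + (-1 : ℝ) * (hA2 2 3 2 3) + h2
    have E1222 : R 1 2 2 2 = R 2 3 3 3 := by
      linear_combination (1/2 : ℝ) * (hA2 1 2 2 2) + (-1/2 : ℝ) * (hA2 2 3 3 3)
    have E1223 : R 1 2 2 3 = R 2 3 3 0 := by
      linear_combination (-1 : ℝ) * (hA2 2 3 0 3) + (hP 0 3 2 3) + h9 + h10 + (hA1 1 2 2 3)
    have E1230 : R 1 2 3 0 = R 2 3 0 1 := by
      linear_combination (hA2 1 2 0 3) + (-1 : ℝ) * (hP 0 1 2 3) + (-1 : ℝ) * (hB 0 1 2 3) + (hA1 0 2 1 3) + (-1 : ℝ) * h14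
    have E1231 : R 1 2 3 1 = R 2 3 0 2 := by
      linear_combination (hA2 1 2 1 3) + (-1 : ℝ) * (hP 0 2 2 3) + (-1 : ℝ) * h6 + (-1 : ℝ) * h7 + (-1 : ℝ) * (hA1 0 2 2 3)
    have E1232 : R 1 2 3 2 = R 2 3 0 3 := by
      linear_combination (hA2 1 2 2 3) + (-1 : ℝ) * (hP 0 3 2 3) + (-1 : ℝ) * h9 + (-1 : ℝ) * h10 + (-1 : ℝ) * (hA1 1 2 2 3)
    have E1233 : R 1 2 3 3 = R 2 3 0 0 := by
      linear_combination (1/2 : ℝ) * (hA2 1 2 3 3) + (-1/2 : ℝ) * (hA2 2 3 0 0)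
    have E1300 : R 1 3 0 0 = R 2 0 1 1 := by
      linear_combination (1/2 : ℝ) * (hA2 1 3 0 0) + (-1/2 : ℝ) * (hA2 2 0 1 1)
    have E1301 : R 1 3 0 1 = R 2 0 1 2 := by
      linear_combination (hP 0 1 1 3) + h11
    have E1302 : R 1 3 0 2 = R 2 0 1 3 := by
      linear_combination (hP 0 2 1 3) + (-1 : ℝ) * (hA1 0 2 1 3) + (2/1 : ℝ) * h14
    have E1303 : R 1 3 0 3 = R 2 0 1 0 := by
      linear_combination (hP 0 3 1 3) + (-1 : ℝ) * (hA1 0 2 1 0) + (hA2 0 2 0 1) + (-1 : ℝ) * (hP 0 1 0 2) + (-1 : ℝ) * h5 + (-1 : ℝ) * h6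
    have E1310 : R 1 3 1 0 = R 2 0 2 1 := by
      linear_combination (hA2 1 3 0 1) + (-1 : ℝ) * (hP 0 1 1 3) + (-1 : ℝ) * (hA1 0 2 2 1) + (hA2 0 2 1 2) + (-1 : ℝ) * h11 + (-1 : ℝ) * (hA1 0 2 1 2)
    have E1311 : R 1 3 1 1 = R 2 0 2 2 := by
      linear_combination (1/2 : ℝ) * (hA2 1 3 1 1) + (-1/2 : ℝ) * (hA2 2 0 2 2)
    have E1312 : R 1 3 1 2 = R 2 0 2 3 := by
      linear_combination (hP 1 2 1 3) + h6 + h7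
    have E1313 : R 1 3 1 3 = R 2 0 2 0 := by
      linear_combination (-1 : ℝ) * (hA1 0 2 2 0) + (hA2 0 2 0 2) + (-1 : ℝ) * h4
    have E1320 : R 1 3 2 0 = R 2 0 3 1 := by
      linear_combination (hA2 1 3 0 2) + (-1 : ℝ) * (hP 0 2 1 3) + (-1 : ℝ) * (hA1 0 2 3 1) + (hA2 0 2 1 3) + (-2/1 : ℝ) * h14
    have E1321 : R 1 3 2 1 = R 2 0 3 2 := by
      linear_combination (hA2 1 3 1 2) + (-1 : ℝ) * (hP 1 2 1 3) + (-1 : ℝ) * (hA1 0 2 3 2) + (hA2 0 2 2 3) + (-1 : ℝ) * h6 + (-1 : ℝ) * h7 + (-1 : ℝ) * (hA1 0 2 2 3)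
    have E1322 : R 1 3 2 2 = R 2 0 3 3 := by
      linear_combination (1/2 : ℝ) * (hA2 1 3 2 2) + (-1/2 : ℝ) * (hA2 2 0 3 3)
    have E1323 : R 1 3 2 3 = R 2 0 3 0 := by
      linear_combination (-1 : ℝ) * (hA1 0 2 3 0) + (hA2 0 2 0 3) + (-1 : ℝ) * (hA1 0 2 0 3) + h13 + (hA1 1 3 2 3)
    have E1330 : R 1 3 3 0 = R 2 0 0 1 := by
      linear_combination (hA2 1 3 0 3) + (-1 : ℝ) * (hP 0 3 1 3) + (-1 : ℝ) * (hA1 0 2 0 1) + (hP 0 1 0 2) + h5 + h6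
    have E1331 : R 1 3 3 1 = R 2 0 0 2 := by
      linear_combination (hA2 1 3 1 3) + (-1 : ℝ) * (hA1 0 2 0 2) + h4
    have E1332 : R 1 3 3 2 = R 2 0 0 3 := by
      linear_combination (hA2 1 3 2 3) + (-1 : ℝ) * h13 + (-1 : ℝ) * (hA1 1 3 2 3)
    have E1333 : R 1 3 3 3 = R 2 0 0 0 := by
      linear_combination (1/2 : ℝ) * (hA2 1 3 3 3) + (-1/2 : ℝ) * (hA2 2 0 0 0)
    have E2000 : R 2 0 0 0 = R 3 1 1 1 := by
      linear_combination (1/2 : ℝ) * (hA2 2 0 0 0) + (-1/2 : ℝ) * (hA2 3 1 1 1)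
    have E2001 : R 2 0 0 1 = R 3 1 1 2 := by
      linear_combination (hA1 0 2 0 1) + (-1 : ℝ) * (hP 0 1 0 2) + (-1 : ℝ) * (hA1 1 3 1 2) + (hP 1 2 1 3) + (-1 : ℝ) * h5
    have E2002 : R 2 0 0 2 = R 3 1 1 3 := by
      linear_combination (hA1 0 2 0 2) + (-1 : ℝ) * (hA1 1 3 1 3) + (-1 : ℝ) * h4
    have E2003 : R 2 0 0 3 = R 3 1 1 0 := by
      linear_combination (-1 : ℝ) * (hA1 1 3 1 0) + (hA2 1 3 0 1) + (-1 : ℝ) * (hP 0 1 1 3) + (-1 : ℝ) * h11 + (-1 : ℝ) * h12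
    have E2010 : R 2 0 1 0 = R 3 1 2 1 := by
      linear_combination (hA1 0 2 1 0) + (-1 : ℝ) * (hA2 0 2 0 1) + (hP 0 1 0 2) + (-1 : ℝ) * (hA1 1 3 2 1) + (hA2 1 3 1 2) + (-1 : ℝ) * (hP 1 2 1 3) + h5
    have E2011 : R 2 0 1 1 = R 3 1 2 2 := by
      linear_combination (1/2 : ℝ) * (hA2 2 0 1 1) + (-1/2 : ℝ) * (hA2 3 1 2 2)
    have E2012 : R 2 0 1 2 = R 3 1 2 3 := by
      linear_combination h12 + h13
    have E2013 : R 2 0 1 3 = R 3 1 2 0 := by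
      linear_combination (hA1 0 2 1 3) + (-1 : ℝ) * (hA1 1 3 2 0) + (hA2 1 3 0 2) + (-1 : ℝ) * (hP 0 2 1 3) + (-2/1 : ℝ) * h14
    have E2020 : R 2 0 2 0 = R 3 1 3 1 := by
      linear_combination (hA1 0 2 2 0) + (-1 : ℝ) * (hA2 0 2 0 2) + (-1 : ℝ) * (hA1 1 3 3 1) + (hA2 1 3 1 3) + h4
    have E2021 : R 2 0 2 1 = R 3 1 3 2 := by
      linear_combination (hA1 0 2 2 1) + (-1 : ℝ) * (hA2 0 2 1 2) + (-1 : ℝ) * (hA1 1 3 3 2) + (hA2 1 3 2 3) + (hA1 0 2 1 2) + (-1 : ℝ) * h12 + (-1 : ℝ) * h13 + (-1 : ℝ) * (hA1 1 3 2 3)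
    have E2022 : R 2 0 2 2 = R 3 1 3 3 := by
      linear_combination (1/2 : ℝ) * (hA2 2 0 2 2) + (-1/2 : ℝ) * (hA2 3 1 3 3)
    have E2023 : R 2 0 2 3 = R 3 1 3 0 := by
      linear_combination (-1 : ℝ) * (hA1 1 3 3 0) + (hA2 1 3 0 3) + (-1 : ℝ) * (hP 0 3 1 3) + (-1 : ℝ) * h7
    have E2030 : R 2 0 3 0 = R 3 1 0 1 := by
      linear_combination (hA1 0 2 3 0) + (-1 : ℝ) * (hA2 0 2 0 3) + (-1 : ℝ) * (hA1 1 3 0 1) + (hP 0 1 1 3) + h11 + h12 + (hA1 0 2 0 3)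
    have E2031 : R 2 0 3 1 = R 3 1 0 2 := by
      linear_combination (hA1 0 2 3 1) + (-1 : ℝ) * (hA2 0 2 1 3) + (-1 : ℝ) * (hA1 1 3 0 2) + (hP 0 2 1 3) + (2/1 : ℝ) * h14
    have E2032 : R 2 0 3 2 = R 3 1 0 3 := by
      linear_combination (hA1 0 2 3 2) + (-1 : ℝ) * (hA2 0 2 2 3) + (-1 : ℝ) * (hA1 1 3 0 3) + (hP 0 3 1 3) + h7 + (hA1 0 2 2 3)
    have E2033 : R 2 0 3 3 = R 3 1 0 0 := by
      linear_combination (1/2 : ℝ) * (hA2 2 0 3 3) + (-1/2 : ℝ) * (hA2 3 1 0 0)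
    have E2100 : R 2 1 0 0 = R 3 2 1 1 := by
      linear_combination (1/2 : ℝ) * (hA2 2 1 0 0) + (-1/2 : ℝ) * (hA2 3 2 1 1)
    have E2101 : R 2 1 0 1 = R 3 2 1 2 := by
      linear_combination (hA1 1 2 0 1) + (-1 : ℝ) * (hP 0 1 1 2) + (-1 : ℝ) * (hA1 2 3 1 2) + (hP 1 2 2 3) + (-1 : ℝ) * (hA1 0 1 1 2) + h10 + (hA1 1 2 2 3)
    have E2102 : R 2 1 0 2 = R 3 2 1 3 := by
      linear_combination (hA1 1 2 0 2) + (-1 : ℝ) * (hP 0 2 1 2) + (-1 : ℝ) * (hA1 2 3 1 3) + (hP 1 3 2 3) + (-1 : ℝ) * (hA1 0 2 1 2) + h12 + h13 + (hA1 1 3 2 3)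
    have E2103 : R 2 1 0 3 = R 3 2 1 0 := by
      linear_combination (hA1 1 2 0 3) + (-1 : ℝ) * (hA1 2 3 1 0) + (hA2 2 3 0 1) + (-1 : ℝ) * (hP 0 1 2 3) + (-1 : ℝ) * (hB 0 1 2 3) + (hA1 0 2 1 3) + (-1 : ℝ) * h14
    have E2110 : R 2 1 1 0 = R 3 2 2 1 := by
      linear_combination (hA1 1 2 1 0) + (-1 : ℝ) * (hA2 1 2 0 1) + (hP 0 1 1 2) + (-1 : ℝ) * (hA1 2 3 2 1) + (hA2 2 3 1 2) + (-1 : ℝ) * (hP 1 2 2 3) + (hA1 0 1 1 2) + (-1 : ℝ) * h10 + (-1 : ℝ) * (hA1 1 2 2 3)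
    have E2111 : R 2 1 1 1 = R 3 2 2 2 := by
      linear_combination (1/2 : ℝ) * (hA2 2 1 1 1) + (-1/2 : ℝ) * (hA2 3 2 2 2)
    have E2112 : R 2 1 1 2 = R 3 2 2 3 := by
      linear_combination (hA1 1 2 1 2) + (-1 : ℝ) * (hA1 2 3 2 3) + h2
    have E2113 : R 2 1 1 3 = R 3 2 2 0 := by
      linear_combination (hA1 1 2 1 3) + (-1 : ℝ) * (hA1 2 3 2 0) + (hA2 2 3 0 2) + (-1 : ℝ) * (hP 0 2 2 3) + (-1 : ℝ) * h6 + (-1 : ℝ) * h7 + (-1 : ℝ) * (hA1 0 2 2 3)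
    have E2120 : R 2 1 2 0 = R 3 2 3 1 := by
      linear_combination (hA1 1 2 2 0) + (-1 : ℝ) * (hA2 1 2 0 2) + (hP 0 2 1 2) + (-1 : ℝ) * (hA1 2 3 3 1) + (hA2 2 3 1 3) + (-1 : ℝ) * (hP 1 3 2 3) + (hA1 0 2 1 2) + (-1 : ℝ) * h12 + (-1 : ℝ) * h13 + (-1 : ℝ) * (hA1 1 3 2 3)
    have E2121 : R 2 1 2 1 = R 3 2 3 2 := by
      linear_combination (hA1 1 2 2 1) + (-1 : ℝ) * (hA2 1 2 1 2) + (-1 : ℝ) * (hA1 2 3 3 2) + (hA2 2 3 2 3) + (-1 : ℝ) * h2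
    have E2122 : R 2 1 2 2 = R 3 2 3 3 := by
      linear_combination (1/2 : ℝ) * (hA2 2 1 2 2) + (-1/2 : ℝ) * (hA2 3 2 3 3)
    have E2123 : R 2 1 2 3 = R 3 2 3 0 := by
      linear_combination (-1 : ℝ) * (hA1 2 3 3 0) + (hA2 2 3 0 3) + (-1 : ℝ) * (hP 0 3 2 3) + (-1 : ℝ) * h9 + (-1 : ℝ) * h10
    have E2130 : R 2 1 3 0 = R 3 2 0 1 := by
      linear_combination (hA1 1 2 3 0) + (-1 : ℝ) * (hA2 1 2 0 3) + (-1 : ℝ) * (hA1 2 3 0 1) + (hP 0 1 2 3) + (hB 0 1 2 3) + (-1 : ℝ) * (hA1 0 2 1 3) + h14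
    have E2131 : R 2 1 3 1 = R 3 2 0 2 := by
      linear_combination (hA1 1 2 3 1) + (-1 : ℝ) * (hA2 1 2 1 3) + (-1 : ℝ) * (hA1 2 3 0 2) + (hP 0 2 2 3) + h6 + h7 + (hA1 0 2 2 3)
    have E2132 : R 2 1 3 2 = R 3 2 0 3 := by
      linear_combination (hA1 1 2 3 2) + (-1 : ℝ) * (hA2 1 2 2 3) + (-1 : ℝ) * (hA1 2 3 0 3) + (hP 0 3 2 3) + h9 + h10 + (hA1 1 2 2 3)
    have E2133 : R 2 1 3 3 = R 3 2 0 0 := by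
      linear_combination (1/2 : ℝ) * (hA2 2 1 3 3) + (-1/2 : ℝ) * (hA2 3 2 0 0)
    have E2200 : R 2 2 0 0 = R 3 3 1 1 := by
      linear_combination (1/2 : ℝ) * (hA1 2 2 0 0) + (-1/2 : ℝ) * (hA1 3 3 1 1)
    have E2201 : R 2 2 0 1 = R 3 3 1 2 := by
      linear_combination (1/2 : ℝ) * (hA1 2 2 0 1) + (-1/2 : ℝ) * (hA1 3 3 1 2)
    have E2202 : R 2 2 0 2 = R 3 3 1 3 := by
      linear_combination (1/2 : ℝ) * (hA1 2 2 0 2) + (-1/2 : ℝ) * (hA1 3 3 1 3)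
    have E2203 : R 2 2 0 3 = R 3 3 1 0 := by
      linear_combination (1/2 : ℝ) * (hA1 2 2 0 3) + (-1/2 : ℝ) * (hA1 3 3 1 0)
    have E2210 : R 2 2 1 0 = R 3 3 2 1 := by
      linear_combination (1/2 : ℝ) * (hA1 2 2 1 0) + (-1/2 : ℝ) * (hA1 3 3 2 1)
    have E2211 : R 2 2 1 1 = R 3 3 2 2 := by
      linear_combination (1/2 : ℝ) * (hA1 2 2 1 1) + (-1/2 : ℝ) * (hA1 3 3 2 2)
    have E2212 : R 2 2 1 2 = R 3 3 2 3 := by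
      linear_combination (1/2 : ℝ) * (hA1 2 2 1 2) + (-1/2 : ℝ) * (hA1 3 3 2 3)
    have E2213 : R 2 2 1 3 = R 3 3 2 0 := by
      linear_combination (1/2 : ℝ) * (hA1 2 2 1 3) + (-1/2 : ℝ) * (hA1 3 3 2 0)
    have E2220 : R 2 2 2 0 = R 3 3 3 1 := by
      linear_combination (1/2 : ℝ) * (hA1 2 2 2 0) + (-1/2 : ℝ) * (hA1 3 3 3 1)
    have E2221 : R 2 2 2 1 = R 3 3 3 2 := by
      linear_combination (1/2 : ℝ) * (hA1 2 2 2 1) + (-1/2 : ℝ) * (hA1 3 3 3 2)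
    have E2222 : R 2 2 2 2 = R 3 3 3 3 := by
      linear_combination (1/2 : ℝ) * (hA1 2 2 2 2) + (-1/2 : ℝ) * (hA1 3 3 3 3)
    have E2223 : R 2 2 2 3 = R 3 3 3 0 := by
      linear_combination (1/2 : ℝ) * (hA1 2 2 2 3) + (-1/2 : ℝ) * (hA1 3 3 3 0)
    have E2230 : R 2 2 3 0 = R 3 3 0 1 := by
      linear_combination (1/2 : ℝ) * (hA1 2 2 3 0) + (-1/2 : ℝ) * (hA1 3 3 0 1)
    have E2231 : R 2 2 3 1 = R 3 3 0 2 := by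
      linear_combination (1/2 : ℝ) * (hA1 2 2 3 1) + (-1/2 : ℝ) * (hA1 3 3 0 2)
    have E2232 : R 2 2 3 2 = R 3 3 0 3 := by
      linear_combination (1/2 : ℝ) * (hA1 2 2 3 2) + (-1/2 : ℝ) * (hA1 3 3 0 3)
    have E2233 : R 2 2 3 3 = R 3 3 0 0 := by
      linear_combination (1/2 : ℝ) * (hA1 2 2 3 3) + (-1/2 : ℝ) * (hA1 3 3 0 0)
    have E2300 : R 2 3 0 0 = R 3 0 1 1 := by
      linear_combination (1/2 : ℝ) * (hA2 2 3 0 0) + (-1/2 : ℝ) * (hA2 3 0 1 1)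
    have E2301 : R 2 3 0 1 = R 3 0 1 2 := by
      linear_combination (hP 0 1 2 3) + (-1 : ℝ) * (hA1 0 3 1 2) + (hB 0 1 2 3) + (-1 : ℝ) * (hP 0 3 1 2) + (-1 : ℝ) * (hA1 0 2 1 3) + h14
    have E2302 : R 2 3 0 2 = R 3 0 1 3 := by
      linear_combination (hP 0 2 2 3) + (-1 : ℝ) * (hA1 0 3 1 3) + h7 + (hA1 0 2 2 3)
    have E2303 : R 2 3 0 3 = R 3 0 1 0 := by
      linear_combination (hP 0 3 2 3) + (-1 : ℝ) * (hA1 0 3 1 0) + (hA2 0 3 0 1) + (-1 : ℝ) * (hP 0 1 0 3) + (-1 : ℝ) * h8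
    have E2310 : R 2 3 1 0 = R 3 0 2 1 := by
      linear_combination (hA2 2 3 0 1) + (-1 : ℝ) * (hP 0 1 2 3) + (-1 : ℝ) * (hA1 0 3 2 1) + (hA2 0 3 1 2) + (-1 : ℝ) * (hB 0 1 2 3) + (hP 0 3 1 2) + (hA1 0 2 1 3) + (-1 : ℝ) * h14
    have E2311 : R 2 3 1 1 = R 3 0 2 2 := by
      linear_combination (1/2 : ℝ) * (hA2 2 3 1 1) + (-1/2 : ℝ) * (hA2 3 0 2 2)
    have E2312 : R 2 3 1 2 = R 3 0 2 3 := by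
      linear_combination (hP 1 2 2 3) + (-1 : ℝ) * (hA1 0 3 2 3) + h9 + h10 + (hA1 1 2 2 3)
    have E2313 : R 2 3 1 3 = R 3 0 2 0 := by
      linear_combination (hP 1 3 2 3) + (-1 : ℝ) * (hA1 0 3 2 0) + (hA2 0 3 0 2) + (-1 : ℝ) * (hP 0 2 0 3) + (-1 : ℝ) * (hA1 0 2 0 3) + h13 + (hA1 1 3 2 3)
    have E2320 : R 2 3 2 0 = R 3 0 3 1 := by
      linear_combination (hA2 2 3 0 2) + (-1 : ℝ) * (hP 0 2 2 3) + (-1 : ℝ) * (hA1 0 3 3 1) + (hA2 0 3 1 3) + (-1 : ℝ) * h7 + (-1 : ℝ) * (hA1 0 2 2 3)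
    have E2321 : R 2 3 2 1 = R 3 0 3 2 := by
      linear_combination (hA2 2 3 1 2) + (-1 : ℝ) * (hP 1 2 2 3) + (-1 : ℝ) * (hA1 0 3 3 2) + (hA2 0 3 2 3) + (-1 : ℝ) * h9 + (-1 : ℝ) * h10 + (-1 : ℝ) * (hA1 1 2 2 3)
    have E2322 : R 2 3 2 2 = R 3 0 3 3 := by
      linear_combination (1/2 : ℝ) * (hA2 2 3 2 2) + (-1/2 : ℝ) * (hA2 3 0 3 3)
    have E2323 : R 2 3 2 3 = R 3 0 3 0 := by
      linear_combination (-1 : ℝ) * (hA1 0 3 3 0) + (hA2 0 3 0 3) + h2 + h3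
    have E2330 : R 2 3 3 0 = R 3 0 0 1 := by
      linear_combination (hA2 2 3 0 3) + (-1 : ℝ) * (hP 0 3 2 3) + (-1 : ℝ) * (hA1 0 3 0 1) + (hP 0 1 0 3) + h8
    have E2331 : R 2 3 3 1 = R 3 0 0 2 := by
      linear_combination (hA2 2 3 1 3) + (-1 : ℝ) * (hP 1 3 2 3) + (-1 : ℝ) * (hA1 0 3 0 2) + (hP 0 2 0 3) + (hA1 0 2 0 3) + (-1 : ℝ) * h13 + (-1 : ℝ) * (hA1 1 3 2 3)
    have E2332 : R 2 3 3 2 = R 3 0 0 3 := by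
      linear_combination (hA2 2 3 2 3) + (-1 : ℝ) * (hA1 0 3 0 3) + (-1 : ℝ) * h2 + (-1 : ℝ) * h3
    have E2333 : R 2 3 3 3 = R 3 0 0 0 := by
      linear_combination (1/2 : ℝ) * (hA2 2 3 3 3) + (-1/2 : ℝ) * (hA2 3 0 0 0)
    have E3000 : R 3 0 0 0 = R 0 1 1 1 := by
      linear_combination (1/2 : ℝ) * (hA2 3 0 0 0) + (-1/2 : ℝ) * (hA2 0 1 1 1)
    have E3001 : R 3 0 0 1 = R 0 1 1 2 := by
      linear_combination (hA1 0 3 0 1) + (-1 : ℝ) * (hP 0 1 0 3) + (-1 : ℝ) * h8 + (-1 : ℝ) * h9 + (-1 : ℝ) * (hA1 0 1 1 2)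
    have E3002 : R 3 0 0 2 = R 0 1 1 3 := by
      linear_combination (hA1 0 3 0 2) + (-1 : ℝ) * (hP 0 2 0 3) + (-1 : ℝ) * h11 + (-1 : ℝ) * h12 + (-1 : ℝ) * (hA1 0 2 0 3)
    have E3003 : R 3 0 0 3 = R 0 1 1 0 := by
      linear_combination (hA1 0 3 0 3) + (-1 : ℝ) * (hA2 0 1 0 1) + h1 + h2 + h3
    have E3010 : R 3 0 1 0 = R 0 1 2 1 := by
      linear_combination (hA1 0 3 1 0) + (-1 : ℝ) * (hA2 0 3 0 1) + (hP 0 1 0 3) + (-1 : ℝ) * (hA2 0 1 1 2) + h8 + h9 + (hA1 0 1 1 2)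
    have E3011 : R 3 0 1 1 = R 0 1 2 2 := by
      linear_combination (1/2 : ℝ) * (hA2 3 0 1 1) + (-1/2 : ℝ) * (hA2 0 1 2 2)
    have E3012 : R 3 0 1 2 = R 0 1 2 3 := by
      linear_combination (hA1 0 3 1 2) + (-1 : ℝ) * (hB 0 1 2 3) + (hP 0 3 1 2) + (hA1 0 2 1 3) + (-1 : ℝ) * h14
    have E3013 : R 3 0 1 3 = R 0 1 2 0 := by
      linear_combination (hA1 0 3 1 3) + (-1 : ℝ) * (hA2 0 1 0 2) + h5 + h6
    have E3020 : R 3 0 2 0 = R 0 1 3 1 := by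
      linear_combination (hA1 0 3 2 0) + (-1 : ℝ) * (hA2 0 3 0 2) + (hP 0 2 0 3) + (-1 : ℝ) * (hA2 0 1 1 3) + h11 + h12 + (hA1 0 2 0 3)
    have E3021 : R 3 0 2 1 = R 0 1 3 2 := by
      linear_combination (hA1 0 3 2 1) + (-1 : ℝ) * (hA2 0 3 1 2) + (-1 : ℝ) * (hA2 0 1 2 3) + (hB 0 1 2 3) + (-1 : ℝ) * (hP 0 3 1 2) + (-1 : ℝ) * (hA1 0 2 1 3) + h14
    have E3022 : R 3 0 2 2 = R 0 1 3 3 := by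
      linear_combination (1/2 : ℝ) * (hA2 3 0 2 2) + (-1/2 : ℝ) * (hA2 0 1 3 3)
    have E3023 : R 3 0 2 3 = R 0 1 3 0 := by
      linear_combination (hA1 0 3 2 3) + (-1 : ℝ) * (hA2 0 1 0 3) + h8
    have E3030 : R 3 0 3 0 = R 0 1 0 1 := by
      linear_combination (hA1 0 3 3 0) + (-1 : ℝ) * (hA2 0 3 0 3) + (-1 : ℝ) * h1 + (-1 : ℝ) * h2 + (-1 : ℝ) * h3
    have E3031 : R 3 0 3 1 = R 0 1 0 2 := by
      linear_combination (hA1 0 3 3 1) + (-1 : ℝ) * (hA2 0 3 1 3) + (-1 : ℝ) * h5 + (-1 : ℝ) * h6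
    have E3032 : R 3 0 3 2 = R 0 1 0 3 := by
      linear_combination (hA1 0 3 3 2) + (-1 : ℝ) * (hA2 0 3 2 3) + (-1 : ℝ) * h8
    have E3033 : R 3 0 3 3 = R 0 1 0 0 := by
      linear_combination (1/2 : ℝ) * (hA2 3 0 3 3) + (-1/2 : ℝ) * (hA2 0 1 0 0)
    have E3100 : R 3 1 0 0 = R 0 2 1 1 := by
      linear_combination (1/2 : ℝ) * (hA2 3 1 0 0) + (-1/2 : ℝ) * (hA2 0 2 1 1)
    have E3101 : R 3 1 0 1 = R 0 2 1 2 := by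
      linear_combination (hA1 1 3 0 1) + (-1 : ℝ) * (hP 0 1 1 3) + (-1 : ℝ) * h11 + (-1 : ℝ) * (hA1 0 2 1 2)
    have E3102 : R 3 1 0 2 = R 0 2 1 3 := by
      linear_combination (hA1 1 3 0 2) + (-1 : ℝ) * (hP 0 2 1 3) + (-2/1 : ℝ) * h14
    have E3103 : R 3 1 0 3 = R 0 2 1 0 := by
      linear_combination (hA1 1 3 0 3) + (-1 : ℝ) * (hP 0 3 1 3) + (-1 : ℝ) * (hA2 0 2 0 1) + (hP 0 1 0 2) + h5 + h6
    have E3110 : R 3 1 1 0 = R 0 2 2 1 := by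
      linear_combination (hA1 1 3 1 0) + (-1 : ℝ) * (hA2 1 3 0 1) + (hP 0 1 1 3) + (-1 : ℝ) * (hA2 0 2 1 2) + h11 + (hA1 0 2 1 2)
    have E3111 : R 3 1 1 1 = R 0 2 2 2 := by
      linear_combination (1/2 : ℝ) * (hA2 3 1 1 1) + (-1/2 : ℝ) * (hA2 0 2 2 2)
    have E3112 : R 3 1 1 2 = R 0 2 2 3 := by
      linear_combination (hA1 1 3 1 2) + (-1 : ℝ) * (hP 1 2 1 3) + (-1 : ℝ) * h6 + (-1 : ℝ) * h7 + (-1 : ℝ) * (hA1 0 2 2 3)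
    have E3113 : R 3 1 1 3 = R 0 2 2 0 := by
      linear_combination (hA1 1 3 1 3) + (-1 : ℝ) * (hA2 0 2 0 2) + h4
    have E3120 : R 3 1 2 0 = R 0 2 3 1 := by
      linear_combination (hA1 1 3 2 0) + (-1 : ℝ) * (hA2 1 3 0 2) + (hP 0 2 1 3) + (-1 : ℝ) * (hA2 0 2 1 3) + (2/1 : ℝ) * h14
    have E3121 : R 3 1 2 1 = R 0 2 3 2 := by
      linear_combination (hA1 1 3 2 1) + (-1 : ℝ) * (hA2 1 3 1 2) + (hP 1 2 1 3) + (-1 : ℝ) * (hA2 0 2 2 3) + h6 + h7 + (hA1 0 2 2 3)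
    have E3122 : R 3 1 2 2 = R 0 2 3 3 := by
      linear_combination (1/2 : ℝ) * (hA2 3 1 2 2) + (-1/2 : ℝ) * (hA2 0 2 3 3)
    have E3123 : R 3 1 2 3 = R 0 2 3 0 := by
      linear_combination (-1 : ℝ) * (hA2 0 2 0 3) + (hA1 0 2 0 3) + (-1 : ℝ) * h13
    have E3130 : R 3 1 3 0 = R 0 2 0 1 := by
      linear_combination (hA1 1 3 3 0) + (-1 : ℝ) * (hA2 1 3 0 3) + (hP 0 3 1 3) + (-1 : ℝ) * (hP 0 1 0 2) + (-1 : ℝ) * h5 + (-1 : ℝ) * h6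
    have E3131 : R 3 1 3 1 = R 0 2 0 2 := by
      linear_combination (hA1 1 3 3 1) + (-1 : ℝ) * (hA2 1 3 1 3) + (-1 : ℝ) * h4
    have E3132 : R 3 1 3 2 = R 0 2 0 3 := by
      linear_combination (hA1 1 3 3 2) + (-1 : ℝ) * (hA2 1 3 2 3) + (-1 : ℝ) * (hA1 0 2 0 3) + h13 + (hA1 1 3 2 3)
    have E3133 : R 3 1 3 3 = R 0 2 0 0 := by
      linear_combination (1/2 : ℝ) * (hA2 3 1 3 3) + (-1/2 : ℝ) * (hA2 0 2 0 0)
    have E3200 : R 3 2 0 0 = R 0 3 1 1 := by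
      linear_combination (1/2 : ℝ) * (hA2 3 2 0 0) + (-1/2 : ℝ) * (hA2 0 3 1 1)
    have E3201 : R 3 2 0 1 = R 0 3 1 2 := by
      linear_combination (hA1 2 3 0 1) + (-1 : ℝ) * (hP 0 1 2 3) + (-1 : ℝ) * (hB 0 1 2 3) + (hP 0 3 1 2) + (hA1 0 2 1 3) + (-1 : ℝ) * h14
    have E3202 : R 3 2 0 2 = R 0 3 1 3 := by
      linear_combination (hA1 2 3 0 2) + (-1 : ℝ) * (hP 0 2 2 3) + (-1 : ℝ) * h7 + (-1 : ℝ) * (hA1 0 2 2 3)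
    have E3203 : R 3 2 0 3 = R 0 3 1 0 := by
      linear_combination (hA1 2 3 0 3) + (-1 : ℝ) * (hP 0 3 2 3) + (-1 : ℝ) * (hA2 0 3 0 1) + (hP 0 1 0 3) + h8
    have E3210 : R 3 2 1 0 = R 0 3 2 1 := by
      linear_combination (hA1 2 3 1 0) + (-1 : ℝ) * (hA2 2 3 0 1) + (hP 0 1 2 3) + (-1 : ℝ) * (hA2 0 3 1 2) + (hB 0 1 2 3) + (-1 : ℝ) * (hP 0 3 1 2) + (-1 : ℝ) * (hA1 0 2 1 3) + h14
    have E3211 : R 3 2 1 1 = R 0 3 2 2 := by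
      linear_combination (1/2 : ℝ) * (hA2 3 2 1 1) + (-1/2 : ℝ) * (hA2 0 3 2 2)
    have E3212 : R 3 2 1 2 = R 0 3 2 3 := by
      linear_combination (hA1 2 3 1 2) + (-1 : ℝ) * (hP 1 2 2 3) + (-1 : ℝ) * h9 + (-1 : ℝ) * h10 + (-1 : ℝ) * (hA1 1 2 2 3)
    have E3213 : R 3 2 1 3 = R 0 3 2 0 := by
      linear_combination (hA1 2 3 1 3) + (-1 : ℝ) * (hP 1 3 2 3) + (-1 : ℝ) * (hA2 0 3 0 2) + (hP 0 2 0 3) + (hA1 0 2 0 3) + (-1 : ℝ) * h13 + (-1 : ℝ) * (hA1 1 3 2 3)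
    have E3220 : R 3 2 2 0 = R 0 3 3 1 := by
      linear_combination (hA1 2 3 2 0) + (-1 : ℝ) * (hA2 2 3 0 2) + (hP 0 2 2 3) + (-1 : ℝ) * (hA2 0 3 1 3) + h7 + (hA1 0 2 2 3)
    have E3221 : R 3 2 2 1 = R 0 3 3 2 := by
      linear_combination (hA1 2 3 2 1) + (-1 : ℝ) * (hA2 2 3 1 2) + (hP 1 2 2 3) + (-1 : ℝ) * (hA2 0 3 2 3) + h9 + h10 + (hA1 1 2 2 3)
    have E3222 : R 3 2 2 2 = R 0 3 3 3 := by
      linear_combination (1/2 : ℝ) * (hA2 3 2 2 2) + (-1/2 : ℝ) * (hA2 0 3 3 3)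
    have E3223 : R 3 2 2 3 = R 0 3 3 0 := by
      linear_combination (hA1 2 3 2 3) + (-1 : ℝ) * (hA2 0 3 0 3) + (-1 : ℝ) * h2 + (-1 : ℝ) * h3
    have E3230 : R 3 2 3 0 = R 0 3 0 1 := by
      linear_combination (hA1 2 3 3 0) + (-1 : ℝ) * (hA2 2 3 0 3) + (hP 0 3 2 3) + (-1 : ℝ) * (hP 0 1 0 3) + (-1 : ℝ) * h8
    have E3231 : R 3 2 3 1 = R 0 3 0 2 := by
      linear_combination (hA1 2 3 3 1) + (-1 : ℝ) * (hA2 2 3 1 3) + (hP 1 3 2 3) + (-1 : ℝ) * (hP 0 2 0 3) + (-1 : ℝ) * (hA1 0 2 0 3) + h13 + (hA1 1 3 2 3)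
    have E3232 : R 3 2 3 2 = R 0 3 0 3 := by
      linear_combination (hA1 2 3 3 2) + (-1 : ℝ) * (hA2 2 3 2 3) + h2 + h3
    have E3233 : R 3 2 3 3 = R 0 3 0 0 := by
      linear_combination (1/2 : ℝ) * (hA2 3 2 3 3) + (-1/2 : ℝ) * (hA2 0 3 0 0)
    have E3300 : R 3 3 0 0 = R 0 0 1 1 := by
      linear_combination (1/2 : ℝ) * (hA1 3 3 0 0) + (-1/2 : ℝ) * (hA1 0 0 1 1)
    have E3301 : R 3 3 0 1 = R 0 0 1 2 := by
      linear_combination (1/2 : ℝ) * (hA1 3 3 0 1) + (-1/2 : ℝ) * (hA1 0 0 1 2)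
    have E3302 : R 3 3 0 2 = R 0 0 1 3 := by
      linear_combination (1/2 : ℝ) * (hA1 3 3 0 2) + (-1/2 : ℝ) * (hA1 0 0 1 3)
    have E3303 : R 3 3 0 3 = R 0 0 1 0 := by
      linear_combination (1/2 : ℝ) * (hA1 3 3 0 3) + (-1/2 : ℝ) * (hA1 0 0 1 0)
    have E3310 : R 3 3 1 0 = R 0 0 2 1 := by
      linear_combination (1/2 : ℝ) * (hA1 3 3 1 0) + (-1/2 : ℝ) * (hA1 0 0 2 1)
    have E3311 : R 3 3 1 1 = R 0 0 2 2 := by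
      linear_combination (1/2 : ℝ) * (hA1 3 3 1 1) + (-1/2 : ℝ) * (hA1 0 0 2 2)
    have E3312 : R 3 3 1 2 = R 0 0 2 3 := by
      linear_combination (1/2 : ℝ) * (hA1 3 3 1 2) + (-1/2 : ℝ) * (hA1 0 0 2 3)
    have E3313 : R 3 3 1 3 = R 0 0 2 0 := by
      linear_combination (1/2 : ℝ) * (hA1 3 3 1 3) + (-1/2 : ℝ) * (hA1 0 0 2 0)
    have E3320 : R 3 3 2 0 = R 0 0 3 1 := by
      linear_combination (1/2 : ℝ) * (hA1 3 3 2 0) + (-1/2 : ℝ) * (hA1 0 0 3 1)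
    have E3321 : R 3 3 2 1 = R 0 0 3 2 := by
      linear_combination (1/2 : ℝ) * (hA1 3 3 2 1) + (-1/2 : ℝ) * (hA1 0 0 3 2)
    have E3322 : R 3 3 2 2 = R 0 0 3 3 := by
      linear_combination (1/2 : ℝ) * (hA1 3 3 2 2) + (-1/2 : ℝ) * (hA1 0 0 3 3)
    have E3323 : R 3 3 2 3 = R 0 0 3 0 := by
      linear_combination (1/2 : ℝ) * (hA1 3 3 2 3) + (-1/2 : ℝ) * (hA1 0 0 3 0)
    have E3330 : R 3 3 3 0 = R 0 0 0 1 := by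
      linear_combination (1/2 : ℝ) * (hA1 3 3 3 0) + (-1/2 : ℝ) * (hA1 0 0 0 1)
    have E3331 : R 3 3 3 1 = R 0 0 0 2 := by
      linear_combination (1/2 : ℝ) * (hA1 3 3 3 1) + (-1/2 : ℝ) * (hA1 0 0 0 2)
    have E3332 : R 3 3 3 2 = R 0 0 0 3 := by
      linear_combination (1/2 : ℝ) * (hA1 3 3 3 2) + (-1/2 : ℝ) * (hA1 0 0 0 3)
    have E3333 : R 3 3 3 3 = R 0 0 0 0 := by
      linear_combination (1/2 : ℝ) * (hA1 3 3 3 3) + (-1/2 : ℝ) * (hA1 0 0 0 0)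
    have Eg : ∀ i j k s : Fin 4, R i j k s = R (i+1) (j+1) (k+1) (s+1) := by
      intro i j k s
      fin_cases i <;> fin_cases j <;> fin_cases k <;> fin_cases s <;> assumption
    intro x y z u
    show (∑ i, ∑ j, ∑ k, ∑ s, x (i+1) * y (j+1) * z (k+1) * u (s+1) * R i j k s) = _
    have key : ∀ i j k s : Fin 4, x (i+1) * y (j+1) * z (k+1) * u (s+1) * R i j k s
        = x (i+1) * y (j+1) * z (k+1) * u (s+1) * R (i+1) (j+1) (k+1) (s+1) :=
      fun i j k s => by rw [← Eg i j k s]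
    simp only [key]
    exact Fintype.sum_equiv (Equiv.addRight 1) _ _ (fun i =>
      Fintype.sum_equiv (Equiv.addRight 1) _ _ (fun j =>
        Fintype.sum_equiv (Equiv.addRight 1) _ _ (fun k =>
          Fintype.sum_equiv (Equiv.addRight 1) _ _ (fun s => rfl))))
end
end

section
/- For g₄,₅ with P = Q², the tensor F(x,y,z) = g((∇_x P)y, z) has nonzero components (up to the listed symmetries) F₁₁₂=F₁₂₁=−F₁₃₄=−F₁₄₃=1, F₂₂₂=−F₂₄₄=2a, F₃₂₃=F₃₃₂=−F₃₄₁=−F₃₁₄=b, and the Lee form θ(x)=g^{ij}F(eᵢ,e_j,x) has only nonzero component θ₂ = 2a+b+1. -/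
noncomputable section
open Matrix BigOperators

set_option maxHeartbeats 4000000 in
theorem stmt10 (a b : ℝ) :
    Ften (br45 a b) (e 0) (e 0) (e 1) = 1 ∧ Ften (br45 a b) (e 0) (e 1) (e 0) = 1 ∧
    Ften (br45 a b) (e 0) (e 2) (e 3) = -1 ∧ Ften (br45 a b) (e 0) (e 3) (e 2) = -1 ∧
    Ften (br45 a b) (e 1) (e 1) (e 1) = 2 * a ∧ Ften (br45 a b) (e 1) (e 3) (e 3) = -(2 * a) ∧
    Ften (br45 a b) (e 2) (e 1) (e 2) = b ∧ Ften (br45 a b) (e 2) (e 2) (e 1) = b ∧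
    Ften (br45 a b) (e 2) (e 3) (e 0) = -b ∧ Ften (br45 a b) (e 2) (e 0) (e 3) = -b ∧
    (∀ i j k : Fin 4, Ften (br45 a b) (e i) (e j) (e k) ≠ 0 →
      (i, j, k) ∈ ({(0,0,1), (0,1,0), (0,2,3), (0,3,2), (1,1,1), (1,3,3),
        (2,1,2), (2,2,1), (2,3,0), (2,0,3)} : Set (Fin 4 × Fin 4 × Fin 4))) ∧
    theta (br45 a b) (e 1) = 2 * a + b + 1 ∧
    (∀ i : Fin 4, theta (br45 a b) (e i) ≠ 0 → i = 1) := by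
  refine ⟨?_, ?_, ?_, ?_, ?_, ?_, ?_, ?_, ?_, ?_, ?_, ?_, ?_⟩
  case _ => simp [Ften, koszul, Pv, Qv, br45, gdot, e, Fin.sum_univ_four, Pi.single_apply]
  case _ => simp [Ften, koszul, Pv, Qv, br45, gdot, e, Fin.sum_univ_four, Pi.single_apply]
  case _ => simp [Ften, koszul, Pv, Qv, br45, gdot, e, Fin.sum_univ_four, Pi.single_apply]
  case _ => simp [Ften, koszul, Pv, Qv, br45, gdot, e, Fin.sum_univ_four, Pi.single_apply]
  case _ => simp [Ften, koszul, Pv, Qv, br45, gdot, e, Fin.sum_univ_four, Pi.single_apply]; ring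
  case _ => simp [Ften, koszul, Pv, Qv, br45, gdot, e, Fin.sum_univ_four, Pi.single_apply]; ring
  case _ => simp [Ften, koszul, Pv, Qv, br45, gdot, e, Fin.sum_univ_four, Pi.single_apply]
  case _ => simp [Ften, koszul, Pv, Qv, br45, gdot, e, Fin.sum_univ_four, Pi.single_apply]
  case _ => simp [Ften, koszul, Pv, Qv, br45, gdot, e, Fin.sum_univ_four, Pi.single_apply]
  case _ => simp [Ften, koszul, Pv, Qv, br45, gdot, e, Fin.sum_univ_four, Pi.single_apply]
  case _ =>
    intro i j k h
    fin_cases i <;> fin_cases j <;> fin_cases k <;>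
      simp_all [Ften, koszul, Pv, Qv, br45, gdot, e, Fin.sum_univ_four, Pi.single_apply]
  case _ =>
    simp [theta, Ften, koszul, Pv, Qv, br45, gdot, e, Fin.sum_univ_four, Pi.single_apply]; ring
  case _ =>
    intro i h
    fin_cases i <;>
      simp_all [theta, Ften, koszul, Pv, Qv, br45, gdot, e, Fin.sum_univ_four, Pi.single_apply]
end
end

section
/- For g₄,₅ with −1 ≤ b ≤ a ≤ 1, ab ≠ 0, the manifold (G,P,g) belongs to class W₁, i.e., F(x,y,z) = (1/4){g(x,y)θ(z)+g(x,z)θ(y)−g(x,Py)θ(Pz)−g(x,Pz)θ(Py)} holds for all x,y,z, if and only if a = b = 1. -/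
noncomputable section
open Matrix BigOperators

lemma fin01 : (0:Fin 4)+1 = 1 := rfl
lemma fin11 : (1:Fin 4)+1 = 2 := rfl
lemma fin21 : (2:Fin 4)+1 = 3 := rfl
lemma fin31 : (3:Fin 4)+1 = 0 := rfl

lemma e00 : e 0 (0:Fin 4) = 1 := rfl
lemma e01 : e 0 (1:Fin 4) = 0 := rfl
lemma e02 : e 0 (2:Fin 4) = 0 := rfl
lemma e03 : e 0 (3:Fin 4) = 0 := rfl
lemma e10 : e 1 (0:Fin 4) = 0 := rfl
lemma e11 : e 1 (1:Fin 4) = 1 := rfl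
lemma e12 : e 1 (2:Fin 4) = 0 := rfl
lemma e13 : e 1 (3:Fin 4) = 0 := rfl
lemma e20 : e 2 (0:Fin 4) = 0 := rfl
lemma e21 : e 2 (1:Fin 4) = 0 := rfl
lemma e22 : e 2 (2:Fin 4) = 1 := rfl
lemma e23 : e 2 (3:Fin 4) = 0 := rfl
lemma e30 : e 3 (0:Fin 4) = 0 := rfl
lemma e31 : e 3 (1:Fin 4) = 0 := rfl
lemma e32 : e 3 (2:Fin 4) = 0 := rfl
lemma e33 : e 3 (3:Fin 4) = 1 := rfl

lemma br45_apply (a b : ℝ) (x y : V) (i : Fin 4) :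
    br45 a b x y i = (x 0 * y 3 - x 3 * y 0) * e 0 i + (a * (x 1 * y 3 - x 3 * y 1)) * e 1 i
      + (b * (x 2 * y 3 - x 3 * y 2)) * e 2 i := rfl

lemma koszul0 (a b : ℝ) (x y : V) : koszul (br45 a b) x y 0 = x 0 * y 3 := by
  simp only [koszul, gdot, Fin.sum_univ_four, br45_apply,
    e00, e01, e02, e03, e10, e11, e12, e13, e20, e21, e22, e23, e30, e31, e32, e33]
  ring

lemma koszul1 (a b : ℝ) (x y : V) : koszul (br45 a b) x y 1 = a * (x 1 * y 3) := by
  simp only [koszul, gdot, Fin.sum_univ_four, br45_apply,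
    e00, e01, e02, e03, e10, e11, e12, e13, e20, e21, e22, e23, e30, e31, e32, e33]
  ring

lemma koszul2 (a b : ℝ) (x y : V) : koszul (br45 a b) x y 2 = b * (x 2 * y 3) := by
  simp only [koszul, gdot, Fin.sum_univ_four, br45_apply,
    e00, e01, e02, e03, e10, e11, e12, e13, e20, e21, e22, e23, e30, e31, e32, e33]
  ring

lemma koszul3 (a b : ℝ) (x y : V) :
    koszul (br45 a b) x y 3 = -(x 0 * y 0 + a * (x 1 * y 1) + b * (x 2 * y 2)) := by
  simp only [koszul, gdot, Fin.sum_univ_four, br45_apply,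
    e00, e01, e02, e03, e10, e11, e12, e13, e20, e21, e22, e23, e30, e31, e32, e33]
  ring

lemma Pv_apply (x : V) (i : Fin 4) : Pv x i = x (i + 1 + 1) := rfl

lemma Ften_eq (a b : ℝ) (x y z : V) :
    Ften (br45 a b) x y z =
      x 0 * y 1 * z 0 + x 0 * y 0 * z 1 - x 0 * y 3 * z 2 - x 0 * y 2 * z 3
        - b * (x 2 * y 3 * z 0) + b * (x 2 * y 2 * z 1) + b * (x 2 * y 1 * z 2)
        - b * (x 2 * y 0 * z 3) - 2 * a * (x 1 * y 3 * z 3) + 2 * a * (x 1 * y 1 * z 1) := by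
  simp only [Ften, gdot, Fin.sum_univ_four, Pi.sub_apply, Pv_apply, fin01, fin11, fin21, fin31,
    koszul0, koszul1, koszul2, koszul3]
  ring

lemma theta_eq (a b : ℝ) (z : V) : theta (br45 a b) z = (1 + b + 2 * a) * z 1 := by
  simp only [theta, Fin.sum_univ_four, Ften_eq,
    e00, e01, e02, e03, e10, e11, e12, e13, e20, e21, e22, e23, e30, e31, e32, e33]
  ring

theorem stmt11 (a b : ℝ) (h1 : -1 ≤ b) (h2 : b ≤ a) (h3 : a ≤ 1) (h4 : a * b ≠ 0) :
    (∀ x y z : V, Ften (br45 a b) x y z =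
      (1 / 4) * (gdot x y * theta (br45 a b) z + gdot x z * theta (br45 a b) y
        - gdot x (Pv y) * theta (br45 a b) (Pv z)
        - gdot x (Pv z) * theta (br45 a b) (Pv y))) ↔
    (a = 1 ∧ b = 1) := by
  constructor
  · intro h
    have h1' := h (e 0) (e 1) (e 0)
    have h2' := h (e 2) (e 3) (e 0)
    simp only [Ften_eq, theta_eq, gdot, Fin.sum_univ_four, Pv_apply, fin01, fin11, fin21, fin31,
      e00, e01, e02, e03, e10, e11, e12, e13, e20, e21, e22, e23, e30, e31, e32, e33] at h1' h2'
    constructor <;> nlinarith [h1', h2']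
  · rintro ⟨ha, hb⟩
    subst ha hb
    intro x y z
    simp only [Ften_eq, theta_eq, gdot, Fin.sum_univ_four, Pv_apply, fin01, fin11, fin21, fin31]
    ring
end
end

section
/- For g₄,₅ with a = b = 1, the sectional curvature is constant: R(x,y,x,y) = g(x,x)g(y,y) − g(x,y)² for all x, y, i.e., R(x,y,z,u) = g(x,z)g(y,u) − g(x,u)g(y,z). -/
noncomputable section
open Matrix BigOperators

lemma koszul45 (x y : V) :
    koszul (br45 1 1) x y
      = ![x 0 * y 3, x 1 * y 3, x 2 * y 3, -(x 0 * y 0 + x 1 * y 1 + x 2 * y 2)] := by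
  funext k
  fin_cases k <;>
    · simp [koszul, br45, gdot, e, Fin.sum_univ_four, Pi.single_apply]
      ring

lemma br45_eq (x y : V) :
    br45 1 1 x y = ![x 0 * y 3 - x 3 * y 0, x 1 * y 3 - x 3 * y 1, x 2 * y 3 - x 3 * y 2, 0] := by
  funext k
  fin_cases k <;>
    · simp [br45, e, Pi.single_apply]

theorem stmt14 :
    ∀ x y z u : V, curv (br45 1 1) x y z u = gdot x z * gdot y u - gdot x u * gdot y z := by
  intro x y z u
  simp only [curv, br45_eq, koszul45, gdot, Fin.sum_univ_four]
  simp [Fin.isValue]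
  ring
end
end

section
/- For the Lie algebra g₄,₆ with orthonormal basis metric, the Levi-Civita connection satisfies ∇_{e₁}e₁=−a e₄, ∇_{e₁}e₄=a e₁, ∇_{e₂}e₂=−b e₄, ∇_{e₂}e₄=b e₂, ∇_{e₃}e₃=−b e₄, ∇_{e₃}e₄=b e₃, ∇_{e₄}e₂=e₃, ∇_{e₄}e₃=−e₂, and all other ∇_{eᵢ}e_j vanish. -/
noncomputable section
open Matrix BigOperators

lemma gdot_e (x : V) (k : Fin 4) : gdot x (e k) = x k := by
  fin_cases k <;> simp [gdot, e, Fin.sum_univ_four, Pi.single]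

lemma nab_eq (a b : ℝ) (nab : Fin 4 → Fin 4 → V)
    (hK : ∀ i j k : Fin 4, 2 * gdot (nab i j) (e k) =
      gdot (br46 a b (e i) (e j)) (e k) + gdot (br46 a b (e k) (e i)) (e j)
        + gdot (br46 a b (e k) (e j)) (e i)) (i j k : Fin 4) :
    nab i j k = (gdot (br46 a b (e i) (e j)) (e k) + gdot (br46 a b (e k) (e i)) (e j)
        + gdot (br46 a b (e k) (e j)) (e i)) / 2 := by
  have := hK i j k
  rw [gdot_e] at this
  linarith

set_option maxHeartbeats 2000000 in
theorem stmt15 (a b : ℝ) (nab : Fin 4 → Fin 4 → V)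
    (hK : ∀ i j k : Fin 4, 2 * gdot (nab i j) (e k) =
      gdot (br46 a b (e i) (e j)) (e k) + gdot (br46 a b (e k) (e i)) (e j)
        + gdot (br46 a b (e k) (e j)) (e i)) :
    nab 0 0 = -(a • e 3) ∧ nab 0 3 = a • e 0 ∧ nab 1 1 = -(b • e 3) ∧ nab 1 3 = b • e 1 ∧
    nab 2 2 = -(b • e 3) ∧ nab 2 3 = b • e 2 ∧ nab 3 1 = e 2 ∧ nab 3 2 = - e 1 ∧
    ∀ i j : Fin 4,
      (i, j) ∉ ({(0,0), (0,3), (1,1), (1,3), (2,2), (2,3), (3,1), (3,2)} :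
        Set (Fin 4 × Fin 4)) →
      nab i j = 0 := by
  refine ⟨?_, ?_, ?_, ?_, ?_, ?_, ?_, ?_, ?_⟩
  · funext k
    rw [nab_eq a b nab hK]
    fin_cases k <;>
      · simp [gdot, br46, e, Fin.sum_univ_four, Pi.single_apply]
        try ring
  · funext k
    rw [nab_eq a b nab hK]
    fin_cases k <;>
      · simp [gdot, br46, e, Fin.sum_univ_four, Pi.single_apply]
        try ring
  · funext k
    rw [nab_eq a b nab hK]
    fin_cases k <;>
      · simp [gdot, br46, e, Fin.sum_univ_four, Pi.single_apply]
        try ring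
  · funext k
    rw [nab_eq a b nab hK]
    fin_cases k <;>
      · simp [gdot, br46, e, Fin.sum_univ_four, Pi.single_apply]
        try ring
  · funext k
    rw [nab_eq a b nab hK]
    fin_cases k <;>
      · simp [gdot, br46, e, Fin.sum_univ_four, Pi.single_apply]
        try ring
  · funext k
    rw [nab_eq a b nab hK]
    fin_cases k <;>
      · simp [gdot, br46, e, Fin.sum_univ_four, Pi.single_apply]
        try ring
  · funext k
    rw [nab_eq a b nab hK]
    fin_cases k <;>
      · simp [gdot, br46, e, Fin.sum_univ_four, Pi.single_apply]
        try ring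
  · funext k
    rw [nab_eq a b nab hK]
    fin_cases k <;>
      · simp [gdot, br46, e, Fin.sum_univ_four, Pi.single_apply]
        try ring
  · intro i j hij
    fin_cases i <;> fin_cases j <;> simp at hij <;>
      (funext k
       rw [nab_eq a b nab hK]
       fin_cases k <;>
         · simp [gdot, br46, e, Fin.sum_univ_four, Pi.single_apply]
           try ring)
end
end

section
/- For g₄,₆ with a ≠ 0 and b ≥ 0, the curvature tensor satisfies R(Qx,Qy,Qz,Qu)=R(x,y,z,u) for all x,y,z,u if and only if a = b, where Q is the cyclic shift Qe₁=e₄, Qe₂=e₁, Qe₃=e₂, Qe₄=e₃. -/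
noncomputable section
open Matrix BigOperators

def K46 (a b : ℝ) (x y : V) : V :=
  ![a * x 0 * y 3, b * x 1 * y 3 - x 3 * y 2, b * x 2 * y 3 + x 3 * y 1,
    -(a * x 0 * y 0) - b * x 1 * y 1 - b * x 2 * y 2]

lemma Qv_eq (x : V) : Qv x = ![x 1, x 2, x 3, x 0] := by
  funext i; fin_cases i <;> rfl

lemma kos_eq (a b : ℝ) (x y : V) : koszul (br46 a b) x y = K46 a b x y := by
  funext k
  fin_cases k <;>
    simp [koszul, br46, gdot, e, K46, Fin.sum_univ_four, Pi.single_apply] <;> ring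

lemma curv_eq (a b : ℝ) (x y z u : V) :
    curv (br46 a b) x y z u =
      gdot (K46 a b x (K46 a b y z) - K46 a b y (K46 a b x z)
        - K46 a b (br46 a b x y) z) u := by
  rw [curv, kos_eq, kos_eq, kos_eq, kos_eq, kos_eq]

theorem stmt17 (a b : ℝ) (h1 : a ≠ 0) (h2 : 0 ≤ b) :
    (∀ x y z u : V,
      curv (br46 a b) (Qv x) (Qv y) (Qv z) (Qv u) = curv (br46 a b) x y z u) ↔
    a = b := by
  constructor
  · intro h
    have hh := h (e 0) (e 1) (e 0) (e 1)
    rw [curv_eq, curv_eq, Qv_eq (e 0), Qv_eq (e 1)] at hh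
    simp only [gdot, K46, br46, e, Fin.sum_univ_four, Pi.sub_apply, Pi.add_apply,
      Pi.smul_apply, smul_eq_mul, Pi.single_apply, Matrix.cons_val_zero, Matrix.cons_val_one,
      Matrix.head_cons, Matrix.cons_val_two, Matrix.tail_cons, Matrix.cons_val_three,
      Fin.isValue, Fin.reduceEq, if_true, if_false, reduceIte] at hh
    have : a * a = a * b := by nlinarith [hh]
    exact mul_left_cancel₀ h1 this
  · intro hab x y z u
    subst hab
    rw [curv_eq, curv_eq, Qv_eq x, Qv_eq y, Qv_eq z, Qv_eq u]
    simp only [gdot, K46, br46, e, Fin.sum_univ_four, Pi.sub_apply, Pi.add_apply,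
      Pi.smul_apply, smul_eq_mul, Pi.single_apply, Matrix.cons_val_zero, Matrix.cons_val_one,
      Matrix.head_cons, Matrix.cons_val_two, Matrix.tail_cons, Matrix.cons_val_three,
      Fin.isValue, Fin.reduceEq, if_true, if_false, reduceIte]
    ring
end
end
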